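/- arXiv:1311.3072 — 13 statements merged into one kernel-verified Lean document; each statement's English description precedes it below -/
import Mathlib

section
/- Let S_X Y = g(X,Y)ξ − g(ξ,Y)X + ε g(X,JY)Jξ − ε g(ξ,JY)JX (linear type with ζ = 0). Then for all X, Y, Z ∈ V: R^S_{XY}Z = g(ξ,ξ)·{g(Y,Z)X − g(X,Z)Y + ε g(Y,JZ)JX − ε g(X,JZ)JY} − 2ε g(X,JY)·{g(ξ,JZ)ξ + g(ξ,Z)Jξ}. -/
/-- the curvature-type operator `R^S` of a non-degenerate
homogeneous ε-Kähler structure of linear type (with ζ = 0). -/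
theorem stmt_1
    {V : Type*} [AddCommGroup V] [Module ℝ V] [FiniteDimensional ℝ V]
    (ε : ℝ) (hε : ε = -1 ∨ ε = 1)
    (g : V →ₗ[ℝ] V →ₗ[ℝ] ℝ)
    (hgsymm : ∀ X Y : V, g X Y = g Y X)
    (hgnd : ∀ X : V, (∀ Y : V, g X Y = 0) → X = 0)
    (J : V →ₗ[ℝ] V)
    (hJ2 : ∀ X : V, J (J X) = ε • X)
    (hgJ : ∀ X Y : V, g (J X) (J Y) = -ε * g X Y)
    (ξ : V) (S : V → V → V)
    (hS : ∀ X Y : V, S X Y =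
      g X Y • ξ - g ξ Y • X + (ε * g X (J Y)) • J ξ - (ε * g ξ (J Y)) • J X) :
    ∀ X Y Z : V,
      S (S X Y - S Y X) Z - S X (S Y Z) + S Y (S X Z)
        = g ξ ξ • (g Y Z • X - g X Z • Y
            + (ε * g Y (J Z)) • J X - (ε * g X (J Z)) • J Y)
          - (2 * ε * g X (J Y)) • (g ξ (J Z) • ξ + g ξ Z • J ξ) := by
  have hε2 : ε * ε = 1 := by rcases hε with h | h <;> simp [h]
  have hJa : ∀ X Y : V, g (J X) Y = - g X (J Y) := by
    intro X Y
    have h := hgJ X (J Y)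
    rw [hJ2] at h
    simp only [map_smul, LinearMap.smul_apply, smul_eq_mul] at h
    rcases hε with h1 | h1 <;> subst h1 <;> linarith
  have hsw : ∀ X Y : V, g X (J Y) = - g Y (J X) := by
    intro X Y; rw [hgsymm, hJa]
  have h0 : g ξ (J ξ) = 0 := by have := hsw ξ ξ; linarith
  intro X Y Z
  simp only [hS, map_sub, map_add, map_smul, LinearMap.sub_apply, LinearMap.add_apply,
    LinearMap.smul_apply, smul_eq_mul, hJ2, hgJ, hJa, smul_smul, smul_add, smul_sub,
    map_neg, LinearMap.neg_apply, mul_neg, neg_mul, neg_neg, neg_smul]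
  match_scalars <;>
  · simp only [hgsymm Y X, hgsymm Z X, hgsymm Z Y, hgsymm ξ X, hgsymm ξ Y, hgsymm ξ Z,
      hsw Y X, hsw Z X, hsw Z Y, h0, hsw X ξ, hsw Y ξ, hsw Z ξ]
    rcases hε with h | h <;> subst h <;> ring
end

section
/- Let S_X Y = g(X,Y)ξ − g(ξ,Y)X + ε g(X,JY)Jξ − ε g(ξ,JY)JX (linear type with ζ = 0), and let R_{XY}Z := g(ξ,ξ)·{g(Y,Z)X − g(X,Z)Y + ε g(Y,JZ)JX − ε g(X,JZ)JY − 2ε g(X,JY)JZ} (the curvature operator of constant ε-holomorphic sectional curvature c = −4g(ξ,ξ), in the sign convention R_{XY}Z = ∇_{[X,Y]}Z − ∇_X∇_Y Z + ∇_Y∇_X Z). Then R̃ := R − R^S satisfies R̃_{XY}Z = −2ε g(X,JY)·{g(ξ,ξ)JZ − g(ξ,JZ)ξ − g(ξ,Z)Jξ} for all X, Y, Z ∈ V. -/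
/-- the tensor `R̃ = R − R^S` for a non-degenerate homogeneous
ε-Kähler structure of linear type, where `R` is the curvature operator of
constant ε-holomorphic sectional curvature `c = −4g(ξ,ξ)`. -/
theorem stmt_2
    {V : Type*} [AddCommGroup V] [Module ℝ V] [FiniteDimensional ℝ V]
    (ε : ℝ) (hε : ε = -1 ∨ ε = 1)
    (g : V →ₗ[ℝ] V →ₗ[ℝ] ℝ)
    (hgsymm : ∀ X Y : V, g X Y = g Y X)
    (hgnd : ∀ X : V, (∀ Y : V, g X Y = 0) → X = 0)
    (J : V →ₗ[ℝ] V)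
    (hJ2 : ∀ X : V, J (J X) = ε • X)
    (hgJ : ∀ X Y : V, g (J X) (J Y) = -ε * g X Y)
    (ξ : V) (S : V → V → V)
    (hS : ∀ X Y : V, S X Y =
      g X Y • ξ - g ξ Y • X + (ε * g X (J Y)) • J ξ - (ε * g ξ (J Y)) • J X)
    (R : V → V → V → V)
    (hR : ∀ X Y Z : V, R X Y Z =
      g ξ ξ • (g Y Z • X - g X Z • Y
        + (ε * g Y (J Z)) • J X - (ε * g X (J Z)) • J Y
        - (2 * ε * g X (J Y)) • J Z)) :
    ∀ X Y Z : V,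
      R X Y Z - (S (S X Y - S Y X) Z - S X (S Y Z) + S Y (S X Z))
        = (-(2 * ε * g X (J Y))) • (g ξ ξ • J Z - g ξ (J Z) • ξ - g ξ Z • J ξ) := by
  have hskew : ∀ X Y : V, g (J X) Y = - g X (J Y) := by
    intro X Y
    have h := hgJ X (J Y)
    rw [hJ2 Y, map_smul, smul_eq_mul] at h
    rcases hε with he | he <;> rw [he] at h <;> linarith
  have hsw : ∀ A B : V, g B (J A) = - g A (J B) := by
    intro A B; rw [hgsymm]; exact hskew A B
  have hzero : ∀ A : V, g A (J A) = 0 := by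
    intro A; have := hsw A A; linarith
  intro X Y Z
  simp only [hR, hS, map_add, map_sub, map_smul, smul_eq_mul, LinearMap.add_apply,
    LinearMap.sub_apply, LinearMap.smul_apply, hJ2, hskew, hgJ, hzero]
  simp only [hsw ξ X, hsw ξ Y, hsw ξ Z, hsw X Y, hsw X Z, hsw Y Z,
    hgsymm X ξ, hgsymm Y ξ, hgsymm Z ξ, hgsymm Y X, hgsymm Z X, hgsymm Z Y]
  match_scalars <;> rcases hε with h | h <;> rw [h] <;> ring
end

section
/- Let S_X Y = g(X,Y)ξ − g(Y,ξ)X − Σ_{a=1}^{3} ε_a·(g(J_aY,ξ)J_aX − g(X,J_aY)J_aξ) + Σ_{a=1}^{3} g(X,ζ^a)J_aY for arbitrary ξ, ζ¹, ζ², ζ³ ∈ V. Then the trilinear form S_{XYZ} := g(S_X Y, Z) satisfies S_{XYZ} = −S_{XZY}, and there exist linear forms π¹, π², π³ on V such that for every cyclic permutation (a,b,c) of (1,2,3) and all X, Y, Z ∈ V: S_{X, J_aY, J_aZ} + ε_a·S_{XYZ} = ε_b·π^c(X)·g(J_bY, J_aZ) − ε_c·π^b(X)·g(J_cY, J_aZ).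 -/
/-- pointwise symmetries of a homogeneous ε-quaternion Kähler
structure of linear type.  Indices `0,1,2` of `Fin 3` correspond to `1,2,3`
of the paper; the three equations are those for the cyclic permutations
`(a,b,c) = (1,2,3), (2,3,1), (3,1,2)`. -/
theorem stmt_4
    {V : Type*} [AddCommGroup V] [Module ℝ V] [FiniteDimensional ℝ V]
    (δ : ℝ) (hδ : δ = -1 ∨ δ = 1)
    (ε : Fin 3 → ℝ) (hε : ε = ![-1, δ, δ])
    (g : V →ₗ[ℝ] V →ₗ[ℝ] ℝ)
    (hgsymm : ∀ X Y : V, g X Y = g Y X)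
    (hgnd : ∀ X : V, (∀ Y : V, g X Y = 0) → X = 0)
    (J : Fin 3 → V →ₗ[ℝ] V)
    (hJ2 : ∀ (a : Fin 3) (X : V), J a (J a X) = ε a • X)
    (hJ12 : ∀ X : V, J 0 (J 1 X) = J 2 X)
    (hJskew : ∀ (a : Fin 3) (X Y : V), g (J a X) Y = - g X (J a Y))
    (ξ : V) (ζ : Fin 3 → V) (S : V → V → V)
    (hS : ∀ X Y : V, S X Y =
      g X Y • ξ - g Y ξ • X
        - ∑ a : Fin 3, ε a • (g (J a Y) ξ • J a X - g X (J a Y) • J a ξ)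
        + ∑ a : Fin 3, g X (ζ a) • J a Y) :
    (∀ X Y Z : V, g (S X Y) Z = - g (S X Z) Y) ∧
    ∃ π : Fin 3 → V →ₗ[ℝ] ℝ, ∀ X Y Z : V,
      (g (S X (J 0 Y)) (J 0 Z) + ε 0 * g (S X Y) Z
          = ε 1 * π 2 X * g (J 1 Y) (J 0 Z) - ε 2 * π 1 X * g (J 2 Y) (J 0 Z)) ∧
      (g (S X (J 1 Y)) (J 1 Z) + ε 1 * g (S X Y) Z
          = ε 2 * π 0 X * g (J 2 Y) (J 1 Z) - ε 0 * π 2 X * g (J 0 Y) (J 1 Z)) ∧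
      (g (S X (J 2 Y)) (J 2 Z) + ε 2 * g (S X Y) Z
          = ε 0 * π 1 X * g (J 0 Y) (J 2 Z) - ε 1 * π 0 X * g (J 1 Y) (J 2 Z)) := by
  have hε0 : ε 0 = -1 := by rw [hε]; rfl
  have hε1 : ε 1 = δ := by rw [hε]; rfl
  have hε2 : ε 2 = δ := by rw [hε]; rfl
  have hδne : δ ≠ 0 := by rcases hδ with rfl | rfl <;> norm_num
  -- composition rules for the three structures
  have h00 : ∀ X : V, J 0 (J 0 X) = -X := fun X => by rw [hJ2, hε0, neg_one_smul]
  have h11 : ∀ X : V, J 1 (J 1 X) = δ • X := fun X => by rw [hJ2, hε1]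
  have h22 : ∀ X : V, J 2 (J 2 X) = δ • X := fun X => by rw [hJ2, hε2]
  have h02 : ∀ X : V, J 0 (J 2 X) = -(J 1 X) := fun X => by rw [← hJ12, h00]
  have haux : ∀ X : V, J 1 (J 0 (J 1 X)) = -(δ • J 0 X) := by
    intro X
    have h := hJ2 2 X
    rw [hε2, ← hJ12, ← hJ12] at h
    have h2 := congrArg (J 0) h
    rw [h00, map_smul] at h2
    rw [← h2, neg_neg]
  have h10 : ∀ X : V, J 1 (J 0 X) = -(J 2 X) := by
    intro X
    have h := haux (J 1 X)
    rw [h11, map_smul, map_smul, hJ12] at h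
    have h' : δ • J 1 (J 0 X) = δ • (-(J 2 X)) := by rw [h, smul_neg]
    exact smul_right_injective V hδne h'
  have h12 : ∀ X : V, J 1 (J 2 X) = -(δ • J 0 X) := fun X => by
    rw [← hJ12]; exact haux X
  have h21 : ∀ X : V, J 2 (J 1 X) = δ • J 0 X := fun X => by
    rw [← hJ12 (J 1 X), h11, map_smul]
  have h20 : ∀ X : V, J 2 (J 0 X) = J 1 X := fun X => by
    rw [← hJ12 (J 0 X), h10, map_neg, h02, neg_neg]
  have cswap : ∀ (a : Fin 3) (u v : V), g u (J a v) = - g v (J a u) := fun a u v => by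
    rw [hgsymm, hJskew]
  constructor
  · intro X Y Z
    simp only [hS, map_add, map_sub, map_smul, map_neg, map_sum, LinearMap.add_apply,
      LinearMap.sub_apply, LinearMap.smul_apply, LinearMap.neg_apply, LinearMap.sum_apply,
      Fin.sum_univ_three, smul_eq_mul, hJ12, h00, h11, h22, h02, h10, h12, h21, h20,
      hJskew, hε0, hε1, hε2, cswap 0 ξ Y, cswap 1 ξ Y, cswap 2 ξ Y,
      cswap 0 ξ Z, cswap 1 ξ Z, cswap 2 ξ Z, cswap 0 Z Y, cswap 1 Z Y, cswap 2 Z Y,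
      hgsymm ξ Y, hgsymm ξ Z, hgsymm Z Y]
    ring
  · refine ⟨fun a => (2 * δ) • ((LinearMap.flip g) (ζ a)), fun X Y Z => ?_⟩
    refine ⟨?_, ?_, ?_⟩ <;>
    · simp only [hS, map_add, map_sub, map_smul, map_neg, map_sum, LinearMap.add_apply,
        LinearMap.sub_apply, LinearMap.smul_apply, LinearMap.neg_apply, LinearMap.sum_apply,
        LinearMap.flip_apply, Fin.sum_univ_three, smul_eq_mul, hJ12, h00, h11, h22, h02, h10, h12,
        h21, h20, hJ12, hJskew, hε0, hε1, hε2, cswap 0 ξ Y, cswap 1 ξ Y, cswap 2 ξ Y,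
        cswap 0 ξ Z, cswap 1 ξ Z, cswap 2 ξ Z, cswap 0 Z Y, cswap 1 Z Y, cswap 2 Z Y,
        hgsymm ξ Y, hgsymm ξ Z, hgsymm Z Y]
      rcases hδ with rfl | rfl <;> ring
end

section
/- Assume dim V = 4n with n ≥ 2. Define the subspaces of trilinear forms on V: QK₁(V) = {S : there is θ ∈ V* with S_{XYZ} = Σ_{a=1}^3 θ(J_aX)·g(J_aY,Z)}; QK₂(V) = {S : there are θ¹, θ², θ³ ∈ V* with Σ_{a=1}^3 θ^a∘J_a = 0 and S_{XYZ} = Σ_{a=1}^3 θ^a(X)·g(J_aY,Z)}; QK₃(V) = {S : there is θ ∈ V* with S_{XYZ} = g(X,Y)θ(Z) − g(X,Z)θ(Y) − Σ_{a=1}^3 ε_a·(g(X,J_aY)θ(J_aZ) − g(X,J_aZ)θ(J_aY))}. Then dim QK₁(V) = 4n, dim QK₂(V) = 8n, and dim QK₃(V) = 4n. -/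
open LinearMap Module Submodule

section Aux

variable {V : Type*} [AddCommGroup V] [Module ℝ V]

noncomputable instance myTriACG : AddCommGroup (V →ₗ[ℝ] V →ₗ[ℝ] V →ₗ[ℝ] ℝ) :=
  @LinearMap.addCommGroup _ _ _ (V →ₗ[ℝ] V →ₗ[ℝ] ℝ) _ _ _ LinearMap.addCommGroup _ _ _

lemma myTriSub_apply (a b : V →ₗ[ℝ] V →ₗ[ℝ] V →ₗ[ℝ] ℝ) (X : V) : (a - b) X = a X - b X := rfl

/-- trilinear: X Y Z ↦ B X Y * φ Z -/
noncomputable def myT1 (B : V →ₗ[ℝ] V →ₗ[ℝ] ℝ) (φ : V →ₗ[ℝ] ℝ) : V →ₗ[ℝ] V →ₗ[ℝ] V →ₗ[ℝ] ℝ where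
  toFun X := (B X).smulRight φ
  map_add' X Y := by ext; simp [add_mul]
  map_smul' c X := by ext; simp [mul_assoc]

@[simp] lemma myT1_apply (B : V →ₗ[ℝ] V →ₗ[ℝ] ℝ) (φ : V →ₗ[ℝ] ℝ) (X Y Z : V) :
    myT1 B φ X Y Z = B X Y * φ Z := by simp [myT1]

/-- trilinear: X Y Z ↦ φ Y * B X Z -/
noncomputable def myT2 (B : V →ₗ[ℝ] V →ₗ[ℝ] ℝ) (φ : V →ₗ[ℝ] ℝ) : V →ₗ[ℝ] V →ₗ[ℝ] V →ₗ[ℝ] ℝ where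
  toFun X := φ.smulRight (B X)
  map_add' X Y := by ext; simp [mul_add]
  map_smul' c X := by ext; simp; ring

@[simp] lemma myT2_apply (B : V →ₗ[ℝ] V →ₗ[ℝ] ℝ) (φ : V →ₗ[ℝ] ℝ) (X Y Z : V) :
    myT2 B φ X Y Z = φ Y * B X Z := by simp [myT2]

noncomputable def myPhi1 (g : V →ₗ[ℝ] V →ₗ[ℝ] ℝ) (J : Fin 3 → V →ₗ[ℝ] V) :
    (V →ₗ[ℝ] ℝ) →ₗ[ℝ] (V →ₗ[ℝ] V →ₗ[ℝ] V →ₗ[ℝ] ℝ) where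
  toFun θ := ∑ a : Fin 3, (θ ∘ₗ J a).smulRight (g ∘ₗ J a)
  map_add' θ₁ θ₂ := by
    ext X Y Z
    simp [Finset.sum_add_distrib, add_mul]
  map_smul' c θ := by
    ext X Y Z
    simp [Finset.mul_sum, mul_assoc]

@[simp] lemma myPhi1_apply (g : V →ₗ[ℝ] V →ₗ[ℝ] ℝ) (J : Fin 3 → V →ₗ[ℝ] V)
    (θ : V →ₗ[ℝ] ℝ) (X Y Z : V) :
    myPhi1 g J θ X Y Z = ∑ a : Fin 3, θ (J a X) * g (J a Y) Z := by
  simp [myPhi1]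

noncomputable def myPhi2 (g : V →ₗ[ℝ] V →ₗ[ℝ] ℝ) (J : Fin 3 → V →ₗ[ℝ] V) :
    (Fin 3 → (V →ₗ[ℝ] ℝ)) →ₗ[ℝ] (V →ₗ[ℝ] V →ₗ[ℝ] V →ₗ[ℝ] ℝ) where
  toFun θ := ∑ a : Fin 3, (θ a).smulRight (g ∘ₗ J a)
  map_add' θ₁ θ₂ := by
    ext X Y Z
    simp [Finset.sum_add_distrib, add_mul]
  map_smul' c θ := by
    ext X Y Z
    simp [Finset.mul_sum, mul_assoc]

@[simp] lemma myPhi2_apply (g : V →ₗ[ℝ] V →ₗ[ℝ] ℝ) (J : Fin 3 → V →ₗ[ℝ] V)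
    (θ : Fin 3 → (V →ₗ[ℝ] ℝ)) (X Y Z : V) :
    myPhi2 g J θ X Y Z = ∑ a : Fin 3, θ a X * g (J a Y) Z := by
  simp [myPhi2]

noncomputable def myPhi3 (g : V →ₗ[ℝ] V →ₗ[ℝ] ℝ) (J : Fin 3 → V →ₗ[ℝ] V) (ε : Fin 3 → ℝ) :
    (V →ₗ[ℝ] ℝ) →ₗ[ℝ] (V →ₗ[ℝ] V →ₗ[ℝ] V →ₗ[ℝ] ℝ) where
  toFun θ := myT1 g θ - myT2 g θ -
    ∑ a : Fin 3, ε a • (myT1 (g.compl₂ (J a)) (θ ∘ₗ J a) - myT2 (g.compl₂ (J a)) (θ ∘ₗ J a))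
  map_add' θ₁ θ₂ := by
    ext X Y Z
    simp only [myT1_apply, myT2_apply, myTriSub_apply, LinearMap.sub_apply, LinearMap.sum_apply,
      LinearMap.smul_apply, LinearMap.add_apply, LinearMap.compl₂_apply, LinearMap.comp_apply,
      map_add, smul_eq_mul, Pi.add_apply]
    have : ∀ a ∈ (Finset.univ : Finset (Fin 3)),
        ε a * (g X (J a Y) * (θ₁ (J a Z) + θ₂ (J a Z)) - (θ₁ (J a Y) + θ₂ (J a Y)) * g X (J a Z))
        = ε a * (g X (J a Y) * θ₁ (J a Z) - θ₁ (J a Y) * g X (J a Z))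
          + ε a * (g X (J a Y) * θ₂ (J a Z) - θ₂ (J a Y) * g X (J a Z)) := fun a _ => by ring
    rw [Finset.sum_congr rfl this, Finset.sum_add_distrib]
    ring
  map_smul' c θ := by
    ext X Y Z
    simp only [myT1_apply, myT2_apply, myTriSub_apply, LinearMap.sub_apply, LinearMap.sum_apply,
      LinearMap.smul_apply, LinearMap.compl₂_apply, LinearMap.comp_apply, map_smul,
      smul_eq_mul, RingHom.id_apply]
    have : ∀ a ∈ (Finset.univ : Finset (Fin 3)),
        ε a * (g X (J a Y) * (c * θ (J a Z)) - c * θ (J a Y) * g X (J a Z))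
        = c * (ε a * (g X (J a Y) * θ (J a Z) - θ (J a Y) * g X (J a Z))) := fun a _ => by ring
    rw [Finset.sum_congr rfl this, ← Finset.mul_sum]
    ring

@[simp] lemma myPhi3_apply (g : V →ₗ[ℝ] V →ₗ[ℝ] ℝ) (J : Fin 3 → V →ₗ[ℝ] V) (ε : Fin 3 → ℝ)
    (θ : V →ₗ[ℝ] ℝ) (X Y Z : V) :
    myPhi3 g J ε θ X Y Z = g X Y * θ Z - g X Z * θ Y
      - ∑ a : Fin 3, ε a * (g X (J a Y) * θ (J a Z) - g X (J a Z) * θ (J a Y)) := by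
  simp only [myPhi3, LinearMap.coe_mk, AddHom.coe_mk, myTriSub_apply, LinearMap.sub_apply, LinearMap.sum_apply,
    LinearMap.smul_apply, myT1_apply, myT2_apply, LinearMap.compl₂_apply, LinearMap.comp_apply,
    smul_eq_mul]
  congr 1
  · ring
  · exact Finset.sum_congr rfl fun a _ => by ring

lemma my_trace_smulRight {V : Type*} [AddCommGroup V] [Module ℝ V] [FiniteDimensional ℝ V]
    (f : V →ₗ[ℝ] ℝ) (x : V) :
    LinearMap.trace ℝ V (LinearMap.smulRight f x) = f x := by
  have h : LinearMap.smulRight f x = dualTensorHom ℝ V V (f ⊗ₜ x) := by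
    ext m; simp [dualTensorHom_apply]
  rw [h, trace_eq_contract_apply, contractLeft_apply]

lemma my_finrank_range {M N : Type*} [AddCommGroup M] [Module ℝ M] [AddCommGroup N]
    [Module ℝ N] [FiniteDimensional ℝ M] (Φ : M →ₗ[ℝ] N) (h : Function.Injective Φ) :
    Set.finrank ℝ (Set.range Φ) = Module.finrank ℝ M := by
  rw [Set.finrank, ← LinearMap.coe_range, Submodule.span_eq]
  exact LinearMap.finrank_range_of_inj h

lemma my_finrank_image {M N : Type*} [AddCommGroup M] [Module ℝ M] [AddCommGroup N]
    [Module ℝ N] [FiniteDimensional ℝ M] (Φ : M →ₗ[ℝ] N) (h : Function.Injective Φ)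
    (W : Submodule ℝ M) :
    Set.finrank ℝ (⇑Φ '' ↑W) = Module.finrank ℝ W := by
  rw [Set.finrank, ← Submodule.map_coe, Submodule.span_eq]
  exact (LinearEquiv.finrank_eq (W.equivMapOfInjective Φ h)).symm

end Aux
set_option maxHeartbeats 1000000

/-- the dimensions of the linear-type modules `QK₁`, `QK₂`, `QK₃`
of trilinear forms are `4n`, `8n` and `4n` respectively. -/
theorem stmt_5
    {V : Type*} [AddCommGroup V] [Module ℝ V] [FiniteDimensional ℝ V]
    (n : ℕ) (hn : 2 ≤ n) (hdim : Module.finrank ℝ V = 4 * n)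
    (δ : ℝ) (hδ : δ = -1 ∨ δ = 1)
    (ε : Fin 3 → ℝ) (hε : ε = ![-1, δ, δ])
    (g : V →ₗ[ℝ] V →ₗ[ℝ] ℝ)
    (hgsymm : ∀ X Y : V, g X Y = g Y X)
    (hgnd : ∀ X : V, (∀ Y : V, g X Y = 0) → X = 0)
    (J : Fin 3 → V →ₗ[ℝ] V)
    (hJ2 : ∀ (a : Fin 3) (X : V), J a (J a X) = ε a • X)
    (hJ12 : ∀ X : V, J 0 (J 1 X) = J 2 X)
    (hJskew : ∀ (a : Fin 3) (X Y : V), g (J a X) Y = - g X (J a Y)) :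
    Set.finrank ℝ {S : V →ₗ[ℝ] V →ₗ[ℝ] V →ₗ[ℝ] ℝ |
        ∃ θ : V →ₗ[ℝ] ℝ, ∀ X Y Z : V,
          S X Y Z = ∑ a : Fin 3, θ (J a X) * g (J a Y) Z} = 4 * n ∧
    Set.finrank ℝ {S : V →ₗ[ℝ] V →ₗ[ℝ] V →ₗ[ℝ] ℝ |
        ∃ θ : Fin 3 → V →ₗ[ℝ] ℝ, (∀ X : V, ∑ a : Fin 3, θ a (J a X) = 0) ∧
          ∀ X Y Z : V, S X Y Z = ∑ a : Fin 3, θ a X * g (J a Y) Z} = 8 * n ∧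
    Set.finrank ℝ {S : V →ₗ[ℝ] V →ₗ[ℝ] V →ₗ[ℝ] ℝ |
        ∃ θ : V →ₗ[ℝ] ℝ, ∀ X Y Z : V,
          S X Y Z = g X Y * θ Z - g X Z * θ Y
            - ∑ a : Fin 3, ε a * (g X (J a Y) * θ (J a Z)
                - g X (J a Z) * θ (J a Y))} = 4 * n := by
  classical
  have hε0 : ε 0 = -1 := by rw [hε]; rfl
  have hε1 : ε 1 = δ := by rw [hε]; rfl
  have hε2 : ε 2 = δ := by rw [hε]; rfl
  have hδδ : δ * δ = 1 := by rcases hδ with h | h <;> rw [h] <;> norm_num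
  have hδ0 : δ ≠ 0 := by rcases hδ with h | h <;> rw [h] <;> norm_num
  have hpos : 0 < Module.finrank ℝ V := by rw [hdim]; omega
  have hnontriv : Nontrivial V := Module.finrank_pos_iff.mp hpos
  obtain ⟨y0, hy0⟩ := exists_ne (0 : V)
  -- quaternionic identities
  have h00 : ∀ X : V, J 0 (J 0 X) = -X := fun X => by rw [hJ2 0 X, hε0, neg_one_smul]
  have h11 : ∀ X : V, J 1 (J 1 X) = δ • X := fun X => by rw [hJ2 1 X, hε1]
  have h22 : ∀ X : V, J 2 (J 2 X) = δ • X := fun X => by rw [hJ2 2 X, hε2]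
  have e1 : ∀ X : V, J 1 (J 0 (J 1 X)) = -(δ • J 0 X) := by
    intro X
    have h : J 0 (J 1 (J 0 (J 1 X))) = δ • X := by
      rw [hJ12 (J 0 (J 1 X)), hJ12 X, h22]
    have h2 := congrArg (J 0) h
    rw [h00 (J 1 (J 0 (J 1 X))), map_smul] at h2
    exact neg_eq_iff_eq_neg.mp h2
  have h12 : ∀ X : V, J 1 (J 2 X) = -(δ • J 0 X) := fun X => by rw [← hJ12 X]; exact e1 X
  have h10 : ∀ Y : V, J 1 (J 0 Y) = -(J 2 Y) := by
    intro Y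
    have h := e1 (J 1 Y)
    rw [h11, hJ12, map_smul, map_smul] at h
    have h3 := congrArg (fun v : V => δ • v) h
    simp only [smul_smul, hδδ, one_smul, smul_neg] at h3
    exact h3
  have h02 : ∀ X : V, J 0 (J 2 X) = -(J 1 X) := fun X => by rw [← hJ12 X, h00]
  have h20 : ∀ X : V, J 2 (J 0 X) = J 1 X := by
    intro X
    rw [← hJ12 (J 0 X), h10 X, map_neg, h02, neg_neg]
  have h21 : ∀ X : V, J 2 (J 1 X) = δ • J 0 X := fun X => by
    rw [← hJ12 (J 1 X), h11, map_smul]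
  have hgnd2 : ∀ X : V, (∀ Y : V, g Y X = 0) → X = 0 := fun X h =>
    hgnd X fun Y => (hgsymm X Y).trans (h Y)
  -- linear independence of J 0, J 1, J 2
  have hindep : ∀ c : Fin 3 → ℝ,
      (∀ Y : V, c 0 • J 0 Y + c 1 • J 1 Y + c 2 • J 2 Y = 0) →
      c 0 = 0 ∧ c 1 = 0 ∧ c 2 = 0 := by
    intro c H
    have hc0 : c 0 = 0 := by
      have key : ∀ Y : V, c 0 • J 0 Y = 0 := by
        intro Y
        have h1 := H (J 0 Y)
        rw [h00, h10, h20] at h1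
        have h2 := congrArg (J 0) h1
        simp only [map_add, map_smul, map_neg, map_zero] at h2
        rw [h02 Y, hJ12 Y] at h2
        have h3 := H Y
        have h4 : (2 : ℝ) • (c 0 • J 0 Y) = 0 := by
          linear_combination (norm := module) h3 - h2
        rcases smul_eq_zero.mp h4 with h | h
        · norm_num at h
        · exact h
      have key2 : ∀ Y : V, c 0 • Y = 0 := by
        intro Y
        have h5 := key (J 0 Y)
        rw [h00] at h5
        simpa using h5
      rcases smul_eq_zero.mp (key2 y0) with h | h
      · exact h
      · exact absurd h hy0
    have H' : ∀ Y : V, c 1 • J 1 Y + c 2 • J 2 Y = 0 := by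
      intro Y
      have := H Y
      rw [hc0, zero_smul, zero_add] at this
      exact this
    have e4 : ∀ Y : V, c 1 • Y = c 2 • J 0 Y := by
      intro Y
      have h1 := congrArg (J 1) (H' Y)
      simp only [map_add, map_smul, map_zero] at h1
      rw [h11, h12] at h1
      have h2 : δ • (c 1 • Y - c 2 • J 0 Y) = 0 := by
        linear_combination (norm := module) h1
      rcases smul_eq_zero.mp h2 with h | h
      · exact absurd h hδ0
      · exact sub_eq_zero.mp h
    have e5 : ∀ Y : V, c 1 • J 0 Y = -(c 2 • Y) := by
      intro Y
      have h := e4 (J 0 Y)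
      rw [h00, smul_neg] at h
      exact h
    have e6 : (c 1 * c 1 + c 2 * c 2) • y0 = 0 := by
      have a1 : (c 1 * c 1) • y0 = -((c 2 * c 2) • y0) := by
        rw [mul_smul, e4 y0, smul_comm, e5 y0, smul_neg, ← mul_smul]
      rw [add_smul, a1]
      simp
    have hcc : c 1 * c 1 + c 2 * c 2 = 0 := by
      rcases smul_eq_zero.mp e6 with h | h
      · exact h
      · exact absurd h hy0
    have hc1 : c 1 = 0 := by nlinarith
    have hc2 : c 2 = 0 := by nlinarith
    exact ⟨hc0, hc1, hc2⟩
  -- from vanishing trilinear sum to vanishing coefficients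
  have hzero : ∀ c : Fin 3 → ℝ,
      (∀ Y Z : V, ∑ a : Fin 3, c a * g (J a Y) Z = 0) →
      c 0 = 0 ∧ c 1 = 0 ∧ c 2 = 0 := by
    intro c h
    apply hindep
    intro Y
    apply hgnd
    intro Z
    have h1 := h Y Z
    rw [Fin.sum_univ_three] at h1
    simpa [smul_eq_mul] using h1
  -- dual space dimension
  have hfr : Module.finrank ℝ (V →ₗ[ℝ] ℝ) = 4 * n := by
    rw [Module.finrank_linearMap_self, hdim]
  -- injectivity of Phi1
  have hinj1 : Function.Injective (myPhi1 g J) := by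
    rw [injective_iff_map_eq_zero]
    intro θ hθ
    have hz : ∀ X : V, θ (J 0 X) = 0 := by
      intro X
      have hS : ∀ Y Z : V, ∑ a : Fin 3, θ (J a X) * g (J a Y) Z = 0 := by
        intro Y Z
        have h := myPhi1_apply g J θ X Y Z
        rw [hθ] at h
        simpa using h.symm
      exact (hzero (fun a => θ (J a X)) hS).1
    ext X
    have h := hz (J 0 X)
    rw [h00] at h
    simpa using h
  -- injectivity of Phi2
  have hinj2 : Function.Injective (myPhi2 g J) := by
    rw [injective_iff_map_eq_zero]
    intro θ hθ
    funext a
    ext X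
    have hS : ∀ Y Z : V, ∑ b : Fin 3, θ b X * g (J b Y) Z = 0 := by
      intro Y Z
      have h := myPhi2_apply g J θ X Y Z
      rw [hθ] at h
      simpa using h.symm
    have h3 := hzero (fun b => θ b X) hS
    fin_cases a
    · simpa using h3.1
    · simpa using h3.2.1
    · simpa using h3.2.2
  -- traces of the J's vanish
  have m01 : J 0 * J 1 = J 2 := LinearMap.ext hJ12
  have m10 : J 1 * J 0 = -(J 2) := by ext X; simpa using h10 X
  have m02 : J 0 * J 2 = -(J 1) := by ext X; simpa using h02 X
  have m20 : J 2 * J 0 = J 1 := by ext X; simpa using h20 X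
  have m21 : J 2 * J 1 = δ • J 0 := by ext X; simpa using h21 X
  have m12 : J 1 * J 2 = -(δ • J 0) := by ext X; simpa using h12 X
  have tr2 : LinearMap.trace ℝ V (J 2) = 0 := by
    have h := LinearMap.trace_mul_comm ℝ (J 0) (J 1)
    rw [m01, m10, map_neg] at h
    linarith
  have tr1 : LinearMap.trace ℝ V (J 1) = 0 := by
    have h := LinearMap.trace_mul_comm ℝ (J 0) (J 2)
    rw [m02, m20, map_neg] at h
    linarith
  have tr0 : LinearMap.trace ℝ V (J 0) = 0 := by
    have h := LinearMap.trace_mul_comm ℝ (J 2) (J 1)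
    rw [m21, m12, map_neg, map_smul] at h
    have h2 : δ * LinearMap.trace ℝ V (J 0) = 0 := by
      simp only [smul_eq_mul] at h
      linarith
    rcases mul_eq_zero.mp h2 with h | h
    · exact absurd h hδ0
    · exact h
  -- injectivity of Phi3 (trace argument)
  have hinj3 : Function.Injective (myPhi3 g J ε) := by
    rw [injective_iff_map_eq_zero]
    intro θ hθ
    have hF : ∀ Y Z : V,
        θ Z • Y - θ Y • Z - ∑ a : Fin 3, ε a • (θ (J a Z) • J a Y - θ (J a Y) • J a Z) = 0 := by
      intro Y Z
      apply hgnd2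
      intro X
      have h := myPhi3_apply g J ε θ X Y Z
      rw [hθ] at h
      have h0 : (0:ℝ) = g X Y * θ Z - g X Z * θ Y
          - ∑ a : Fin 3, ε a * (g X (J a Y) * θ (J a Z) - g X (J a Z) * θ (J a Y)) := by
        simpa using h
      have expand : g X (θ Z • Y - θ Y • Z
            - ∑ a : Fin 3, ε a • (θ (J a Z) • J a Y - θ (J a Y) • J a Z))
          = g X Y * θ Z - g X Z * θ Y
            - ∑ a : Fin 3, ε a * (g X (J a Y) * θ (J a Z) - g X (J a Z) * θ (J a Y)) := by
        rw [map_sub, map_sub, map_sum]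
        congr 1
        · simp only [map_smul, smul_eq_mul]
          ring
        · refine Finset.sum_congr rfl fun a _ => ?_
          simp only [map_smul, map_sub, smul_eq_mul]
          ring
      rw [expand, ← h0]
    ext Z
    rw [LinearMap.zero_apply]
    set L : V →ₗ[ℝ] V := θ Z • LinearMap.id - LinearMap.smulRight θ Z
      - ∑ a : Fin 3, ε a • ((θ (J a Z)) • J a - LinearMap.smulRight (θ ∘ₗ J a) (J a Z))
      with hLdef
    have hL : L = 0 := by
      ext Y
      simp only [hLdef, LinearMap.sub_apply, LinearMap.smul_apply, LinearMap.id_apply,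
        LinearMap.smulRight_apply, LinearMap.sum_apply, LinearMap.comp_apply,
        LinearMap.zero_apply]
      exact hF Y Z
    have htrL := congrArg (LinearMap.trace ℝ V) hL
    rw [map_zero] at htrL
    rw [hLdef] at htrL
    rw [map_sub, map_sub, map_smul, map_sum, LinearMap.trace_id, my_trace_smulRight] at htrL
    simp only [map_smul, map_sub, my_trace_smulRight, LinearMap.comp_apply,
      Fin.sum_univ_three, hε0, hε1, hε2, tr0, tr1, tr2, h00, h11, h22, map_neg,
      smul_eq_mul, mul_zero, hdim] at htrL
    -- htrL should now be a scalar identity implying θ Z = 0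
    have hn2 : (0:ℝ) < 4 * (n:ℝ) + 2 := by positivity
    have h9 : (4 * (n:ℝ) + 2) * θ Z = 0 := by
      push_cast at htrL
      linear_combination htrL - 2 * θ Z * hδδ
    rcases mul_eq_zero.mp h9 with h | h
    · exact absurd h (ne_of_gt hn2)
    · exact h
  -- final assembly
  refine ⟨?_, ?_, ?_⟩
  · have hset : {S : V →ₗ[ℝ] V →ₗ[ℝ] V →ₗ[ℝ] ℝ |
        ∃ θ : V →ₗ[ℝ] ℝ, ∀ X Y Z : V,
          S X Y Z = ∑ a : Fin 3, θ (J a X) * g (J a Y) Z} = Set.range (myPhi1 g J) := by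
      ext S
      constructor
      · rintro ⟨θ, hSθ⟩
        exact ⟨θ, by ext X Y Z; rw [myPhi1_apply]; exact (hSθ X Y Z).symm⟩
      · rintro ⟨θ, rfl⟩
        exact ⟨θ, fun X Y Z => myPhi1_apply g J θ X Y Z⟩
    rw [hset, my_finrank_range _ hinj1, hfr]
  · set T : (Fin 3 → (V →ₗ[ℝ] ℝ)) →ₗ[ℝ] (V →ₗ[ℝ] ℝ) :=
      { toFun := fun θ => ∑ a : Fin 3, (θ a) ∘ₗ J a
        map_add' := fun θ₁ θ₂ => by
          simp [LinearMap.add_comp, Finset.sum_add_distrib]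
        map_smul' := fun c θ => by
          simp [LinearMap.smul_comp, Finset.smul_sum] } with hTdef
    have hTapp : ∀ (θ : Fin 3 → (V →ₗ[ℝ] ℝ)) (X : V),
        T θ X = ∑ a : Fin 3, θ a (J a X) := by
      intro θ X
      simp [hTdef]
    have hTsurj : Function.Surjective T := by
      intro φ
      refine ⟨![-(φ ∘ₗ J 0), 0, 0], ?_⟩
      ext X
      rw [hTapp]
      rw [Fin.sum_univ_three]
      simp only [Matrix.cons_val_zero, Matrix.cons_val_one, Matrix.head_cons,
        Matrix.cons_val_two, Matrix.tail_cons, LinearMap.neg_apply, LinearMap.comp_apply,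
        LinearMap.zero_apply, add_zero]
      rw [h00]
      simp
    have hker : Module.finrank ℝ (LinearMap.ker T) = 8 * n := by
      have h1 := LinearMap.finrank_range_add_finrank_ker T
      rw [LinearMap.range_eq_top.mpr hTsurj, finrank_top] at h1
      have h2 : Module.finrank ℝ (Fin 3 → (V →ₗ[ℝ] ℝ)) = 12 * n := by
        rw [Module.finrank_pi_fintype]
        simp [hfr]
        ring
      rw [hfr, h2] at h1
      omega
    have hset : {S : V →ₗ[ℝ] V →ₗ[ℝ] V →ₗ[ℝ] ℝ |
        ∃ θ : Fin 3 → V →ₗ[ℝ] ℝ, (∀ X : V, ∑ a : Fin 3, θ a (J a X) = 0) ∧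
          ∀ X Y Z : V, S X Y Z = ∑ a : Fin 3, θ a X * g (J a Y) Z}
        = ⇑(myPhi2 g J) '' ↑(LinearMap.ker T) := by
      ext S
      constructor
      · rintro ⟨θ, hcon, hSθ⟩
        refine ⟨θ, ?_, ?_⟩
        · simp only [SetLike.mem_coe, LinearMap.mem_ker]
          ext X
          rw [hTapp]
          simpa using hcon X
        · ext X Y Z
          rw [myPhi2_apply]
          exact (hSθ X Y Z).symm
      · rintro ⟨θ, hmem, rfl⟩
        refine ⟨θ, ?_, fun X Y Z => myPhi2_apply g J θ X Y Z⟩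
        intro X
        simp only [SetLike.mem_coe, LinearMap.mem_ker] at hmem
        have h := congrArg (fun f : V →ₗ[ℝ] ℝ => f X) hmem
        rw [← hTapp θ X]
        simpa using h
    rw [hset, my_finrank_image _ hinj2, hker]
  · have hset : {S : V →ₗ[ℝ] V →ₗ[ℝ] V →ₗ[ℝ] ℝ |
        ∃ θ : V →ₗ[ℝ] ℝ, ∀ X Y Z : V,
          S X Y Z = g X Y * θ Z - g X Z * θ Y
            - ∑ a : Fin 3, ε a * (g X (J a Y) * θ (J a Z)
                - g X (J a Z) * θ (J a Y))} = Set.range (myPhi3 g J ε) := by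
      ext S
      constructor
      · rintro ⟨θ, hSθ⟩
        exact ⟨θ, by ext X Y Z; rw [myPhi3_apply]; exact (hSθ X Y Z).symm⟩
      · rintro ⟨θ, rfl⟩
        exact ⟨θ, fun X Y Z => myPhi3_apply g J ε θ X Y Z⟩
    rw [hset, my_finrank_range _ hinj3, hfr]
end

section
/- Take δ = +1, i.e. (ε₁,ε₂,ε₃) = (−1,1,1), and let S_X Y = g(X,Y)ξ − g(Y,ξ)X − Σ_a ε_a·(g(J_aY,ξ)J_aX − g(X,J_aY)J_aξ) (linear type with ζ^a = 0). Then for all X, Y, W ∈ V: R^S_{XY}W = −g(ξ,ξ)·{g(X,W)Y − g(Y,W)X + Σ_a ε_a·(g(X,J_aW)J_aY − g(Y,J_aW)J_aX)} − 2·Σ_a ε_a·(g(ξ,J_aW)g(X,J_aY)ξ + g(ξ,W)g(X,J_aY)J_aξ) + 2·Σ_{(a,b,c)}(g(X,J_aY)g(ξ,J_cW)J_bξ − g(X,J_aY)g(ξ,J_bW)J_cξ), where Σ_{(a,b,c)} runs over the cyclic permutations of (1,2,3). -/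
set_option maxHeartbeats 2000000


/-- the operator `R^S` of a non-degenerate homogeneous
para-quaternion Kähler structure of linear type (δ = +1, ζ^a = 0).
Indices `0,1,2` of `Fin 3` correspond to `1,2,3` of the paper; the last
summand is the sum over the cyclic permutations `(0,1,2), (1,2,0), (2,0,1)`. -/
theorem stmt_6
    {V : Type*} [AddCommGroup V] [Module ℝ V] [FiniteDimensional ℝ V]
    (ε : Fin 3 → ℝ) (hε : ε = ![-1, 1, 1])
    (g : V →ₗ[ℝ] V →ₗ[ℝ] ℝ)
    (hgsymm : ∀ X Y : V, g X Y = g Y X)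
    (hgnd : ∀ X : V, (∀ Y : V, g X Y = 0) → X = 0)
    (J : Fin 3 → V →ₗ[ℝ] V)
    (hJ2 : ∀ (a : Fin 3) (X : V), J a (J a X) = ε a • X)
    (hJ12 : ∀ X : V, J 0 (J 1 X) = J 2 X)
    (hJskew : ∀ (a : Fin 3) (X Y : V), g (J a X) Y = - g X (J a Y))
    (ξ : V) (S : V → V → V)
    (hS : ∀ X Y : V, S X Y =
      g X Y • ξ - g Y ξ • X
        - ∑ a : Fin 3, ε a • (g (J a Y) ξ • J a X - g X (J a Y) • J a ξ)) :
    ∀ X Y W : V,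
      S (S X Y - S Y X) W - S X (S Y W) + S Y (S X W)
        = -(g ξ ξ) • (g X W • Y - g Y W • X
              + ∑ a : Fin 3, ε a • (g X (J a W) • J a Y - g Y (J a W) • J a X))
          - (2 : ℝ) • (∑ a : Fin 3,
              ε a • ((g ξ (J a W) * g X (J a Y)) • ξ
                + (g ξ W * g X (J a Y)) • J a ξ))
          + (2 : ℝ) • (((g X (J 0 Y) * g ξ (J 2 W)) • J 1 ξ
                - (g X (J 0 Y) * g ξ (J 1 W)) • J 2 ξ)
              + ((g X (J 1 Y) * g ξ (J 0 W)) • J 2 ξ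
                - (g X (J 1 Y) * g ξ (J 2 W)) • J 0 ξ)
              + ((g X (J 2 Y) * g ξ (J 1 W)) • J 0 ξ
                - (g X (J 2 Y) * g ξ (J 0 W)) • J 1 ξ)) := by

  intro X Y W
  have he0 : ε 0 = -1 := by rw [hε]; rfl
  have he1 : ε 1 = 1 := by rw [hε]; rfl
  have he2 : ε 2 = 1 := by rw [hε]; rfl
  have h00 : ∀ Z : V, J 0 (J 0 Z) = -Z := by
    intro Z; rw [hJ2, he0]; simp
  have h11 : ∀ Z : V, J 1 (J 1 Z) = Z := by
    intro Z; rw [hJ2, he1]; simp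
  have h22 : ∀ Z : V, J 2 (J 2 Z) = Z := by
    intro Z; rw [hJ2, he2]; simp
  have h01 : ∀ Z : V, J 0 (J 1 Z) = J 2 Z := hJ12
  have h02 : ∀ Z : V, J 0 (J 2 Z) = -(J 1 Z) := by
    intro Z; rw [← h01 Z, h00]
  have h21 : ∀ Z : V, J 2 (J 1 Z) = J 0 Z := by
    intro Z; rw [← h01 (J 1 Z), h11]
  have h10 : ∀ Z : V, J 1 (J 0 Z) = -(J 2 Z) := by
    intro Z
    have : J 2 (J 1 (J 0 Z)) = -Z := by rw [h21, h00]
    have h := congrArg (J 2) this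
    rwa [h22, map_neg] at h
  have h12 : ∀ Z : V, J 1 (J 2 Z) = -(J 0 Z) := by
    intro Z; rw [← h01 Z, h10, h21]
  have h20 : ∀ Z : V, J 2 (J 0 Z) = J 1 Z := by
    intro Z
    have := h01 (J 0 Z)
    rw [h10, map_neg, h02] at this
    simpa using this.symm
  have gsk : ∀ (a : Fin 3) (U Z : V), g U (J a Z) = - g Z (J a U) := by
    intro a U Z
    rw [hgsymm, hJskew]
  have gself : ∀ (a : Fin 3) (U : V), g U (J a U) = 0 := by
    intro a U
    have := gsk a U U
    linarith
  have gYX : g Y X = g X Y := hgsymm Y X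
  have gWX : g W X = g X W := hgsymm W X
  have gWY : g W Y = g Y W := hgsymm W Y
  have gxX : g ξ X = g X ξ := hgsymm ξ X
  have gxY : g ξ Y = g Y ξ := hgsymm ξ Y
  have gxW : g ξ W = g W ξ := hgsymm ξ W
  have gJYX : ∀ a, g Y (J a X) = - g X (J a Y) := fun a => gsk a Y X
  have gJWX : ∀ a, g W (J a X) = - g X (J a W) := fun a => gsk a W X
  have gJWY : ∀ a, g W (J a Y) = - g Y (J a W) := fun a => gsk a W Y
  have gJxX : ∀ a, g ξ (J a X) = - g X (J a ξ) := fun a => gsk a ξ X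
  have gJxY : ∀ a, g ξ (J a Y) = - g Y (J a ξ) := fun a => gsk a ξ Y
  have gJxW : ∀ a, g ξ (J a W) = - g W (J a ξ) := fun a => gsk a ξ W
  have gsX : g X (J 0 X) = 0 := gself 0 X
  simp only [hS, Fin.sum_univ_three, he0, he1, he2]
  simp only [map_add, map_sub, map_smul, map_neg, LinearMap.add_apply,
    LinearMap.sub_apply, LinearMap.smul_apply, LinearMap.neg_apply,
    smul_eq_mul, h00, h11, h22, h01, h02, h10, h12, h20, h21,
    hJskew, gJYX, gJWX, gJWY, gJxX, gJxY, gJxW, gself,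
    gYX, gWX, gWY, gxX, gxY, gxW, neg_smul, one_smul, neg_neg,
    mul_neg, neg_mul, smul_neg, map_zero, zero_smul, smul_zero, zero_mul,
    mul_zero, add_zero, zero_add, sub_zero, zero_sub, neg_zero]
  match_scalars <;> ring
end

section
/- Take δ = +1, i.e. (ε₁,ε₂,ε₃) = (−1,1,1), and let S_X Y = g(X,Y)ξ − g(Y,ξ)X − Σ_a ε_a·(g(J_aY,ξ)J_aX − g(X,J_aY)J_aξ). Let R_{XY}W be the unique vector with g(R_{XY}W, U) = −g(ξ,ξ)·R⁰(X,Y,W,U) for all U (constant ε-quaternion sectional curvature −4g(ξ,ξ), in the sign convention R_{XY}Z = ∇_{[X,Y]}Z − ∇_X∇_Y Z + ∇_Y∇_X Z). Then R̃ := R − R^S satisfies, for all X, Y, W ∈ V: R̃_{XY}W = −2·Σ_a ε_a·g(ξ,ξ)·g(X,J_aY)·J_aW + 2·Σ_{(a,b,c)} g(X,J_aY)·(ε_a g(ξ,J_aW)ξ + ε_a g(ξ,W)J_aξ − g(ξ,J_cW)J_bξ + g(ξ,J_bW)J_cξ), where Σ_{(a,b,c)} runs over the cyclic permutations of (1,2,3).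 -/
set_option maxHeartbeats 4000000 in
/-- the tensor `R̃ = R − R^S` in the para-quaternion Kähler case
(δ = +1), where `R` has constant ε-quaternion sectional curvature `−4g(ξ,ξ)`.
Indices `0,1,2` of `Fin 3` correspond to `1,2,3` of the paper; the last
summand is the sum over the cyclic permutations `(0,1,2), (1,2,0), (2,0,1)`. -/
theorem stmt_7
    {V : Type*} [AddCommGroup V] [Module ℝ V] [FiniteDimensional ℝ V]
    (ε : Fin 3 → ℝ) (hε : ε = ![-1, 1, 1])
    (g : V →ₗ[ℝ] V →ₗ[ℝ] ℝ)
    (hgsymm : ∀ X Y : V, g X Y = g Y X)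
    (hgnd : ∀ X : V, (∀ Y : V, g X Y = 0) → X = 0)
    (J : Fin 3 → V →ₗ[ℝ] V)
    (hJ2 : ∀ (a : Fin 3) (X : V), J a (J a X) = ε a • X)
    (hJ12 : ∀ X : V, J 0 (J 1 X) = J 2 X)
    (hJskew : ∀ (a : Fin 3) (X Y : V), g (J a X) Y = - g X (J a Y))
    (ξ : V) (S : V → V → V)
    (hS : ∀ X Y : V, S X Y =
      g X Y • ξ - g Y ξ • X
        - ∑ a : Fin 3, ε a • (g (J a Y) ξ • J a X - g X (J a Y) • J a ξ))
    (R0 : V → V → V → V → ℝ)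
    (hR0 : ∀ X Y Z W : V, R0 X Y Z W =
      g X Z * g Y W - g Y Z * g X W
        - ∑ a : Fin 3, ε a * (g (J a X) Z * g (J a Y) W
            - g (J a Y) Z * g (J a X) W + 2 * g X (J a Y) * g Z (J a W)))
    (R : V → V → V → V)
    (hR : ∀ X Y W U : V, g (R X Y W) U = -(g ξ ξ) * R0 X Y W U) :
    ∀ X Y W : V,
      R X Y W - (S (S X Y - S Y X) W - S X (S Y W) + S Y (S X W))
        = (-2 : ℝ) • (∑ a : Fin 3, (ε a * g ξ ξ * g X (J a Y)) • J a W)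
          + (2 : ℝ) • (g X (J 0 Y) • ((ε 0 * g ξ (J 0 W)) • ξ
                  + (ε 0 * g ξ W) • J 0 ξ
                  - g ξ (J 2 W) • J 1 ξ + g ξ (J 1 W) • J 2 ξ)
              + g X (J 1 Y) • ((ε 1 * g ξ (J 1 W)) • ξ
                  + (ε 1 * g ξ W) • J 1 ξ
                  - g ξ (J 0 W) • J 2 ξ + g ξ (J 2 W) • J 0 ξ)
              + g X (J 2 Y) • ((ε 2 * g ξ (J 2 W)) • ξ
                  + (ε 2 * g ξ W) • J 2 ξ
                  - g ξ (J 1 W) • J 0 ξ + g ξ (J 0 W) • J 1 ξ)) := by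
  intro X Y W
  have ext : ∀ A B : V, (∀ U : V, g A U = g B U) → A = B := by
    intro A B h
    have h0 : ∀ U : V, g (A - B) U = 0 := by
      intro U; simp [map_sub, LinearMap.sub_apply, h U]
    exact sub_eq_zero.mp (hgnd _ h0)
  have e0 : ε 0 = -1 := by rw [hε]; rfl
  have e1 : ε 1 = 1 := by rw [hε]; rfl
  have e2 : ε 2 = 1 := by rw [hε]; rfl
  have j00 : ∀ x : V, J 0 (J 0 x) = -x := by intro x; rw [hJ2, e0]; simp
  have j11 : ∀ x : V, J 1 (J 1 x) = x := by intro x; rw [hJ2, e1]; simp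
  have j22 : ∀ x : V, J 2 (J 2 x) = x := by intro x; rw [hJ2, e2]; simp
  have j01 : ∀ x : V, J 0 (J 1 x) = J 2 x := hJ12
  have j02 : ∀ x : V, J 0 (J 2 x) = -(J 1 x) := by
    intro x; rw [← hJ12, j00]
  have j21 : ∀ x : V, J 2 (J 1 x) = J 0 x := by
    intro x; rw [← hJ12, j11]
  have j10 : ∀ x : V, J 1 (J 0 x) = -(J 2 x) := by
    intro x; apply ext; intro y
    simp [hJskew, hJ12]
  have j20 : ∀ x : V, J 2 (J 0 x) = J 1 x := by
    intro x; apply ext; intro y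
    simp [hJskew, j02]
  have j12 : ∀ x : V, J 1 (J 2 x) = -(J 0 x) := by
    intro x; apply ext; intro y
    simp [hJskew, j21]
  have gJ : ∀ (a : Fin 3) (u v : V), g u (J a v) = -(g v (J a u)) := by
    intro a u v
    have h1 := hJskew a u v
    have h2 := hgsymm (J a u) v
    linarith
  have gJ0 : ∀ (a : Fin 3) (u : V), g u (J a u) = 0 := by
    intro a u; have := gJ a u u; linarith
  apply ext
  intro U
  -- symmetry canonicalisation lemmas (order: ξ < X < Y < W < U)
  have sXξ : g X ξ = g ξ X := hgsymm X ξ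
  have sYξ : g Y ξ = g ξ Y := hgsymm Y ξ
  have sWξ : g W ξ = g ξ W := hgsymm W ξ
  have sUξ : g U ξ = g ξ U := hgsymm U ξ
  have sYX : g Y X = g X Y := hgsymm Y X
  have sWX : g W X = g X W := hgsymm W X
  have sUX : g U X = g X U := hgsymm U X
  have sWY : g W Y = g Y W := hgsymm W Y
  have sUY : g U Y = g Y U := hgsymm U Y
  have sUW : g U W = g W U := hgsymm U W
  have tXξ : ∀ a : Fin 3, g X (J a ξ) = -(g ξ (J a X)) := fun a => gJ a X ξ
  have tYξ : ∀ a : Fin 3, g Y (J a ξ) = -(g ξ (J a Y)) := fun a => gJ a Y ξ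
  have tWξ : ∀ a : Fin 3, g W (J a ξ) = -(g ξ (J a W)) := fun a => gJ a W ξ
  have tUξ : ∀ a : Fin 3, g U (J a ξ) = -(g ξ (J a U)) := fun a => gJ a U ξ
  have tYX : ∀ a : Fin 3, g Y (J a X) = -(g X (J a Y)) := fun a => gJ a Y X
  have tWX : ∀ a : Fin 3, g W (J a X) = -(g X (J a W)) := fun a => gJ a W X
  have tUX : ∀ a : Fin 3, g U (J a X) = -(g X (J a U)) := fun a => gJ a U X
  have tWY : ∀ a : Fin 3, g W (J a Y) = -(g Y (J a W)) := fun a => gJ a W Y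
  have tUY : ∀ a : Fin 3, g U (J a Y) = -(g Y (J a U)) := fun a => gJ a U Y
  have tUW : ∀ a : Fin 3, g U (J a W) = -(g W (J a U)) := fun a => gJ a U W
  simp only [hS, hR0, Fin.sum_univ_three, e0, e1, e2, map_add, map_sub, map_smul,
    map_neg, LinearMap.add_apply, LinearMap.sub_apply, LinearMap.smul_apply,
    LinearMap.neg_apply, smul_eq_mul, hR,
    j00, j11, j22, j01, j02, j21, j10, j20, j12, hJskew,
    gJ0, sXξ, sYξ, sWξ, sUξ, sYX, sWX, sUX, sWY, sUY, sUW,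
    tXξ, tYξ, tWξ, tUξ, tYX, tWX, tUX, tWY, tUY, tUW,
    neg_smul, one_smul, neg_neg, smul_neg, smul_add, smul_sub, neg_add_rev]
  ring
end

section
/- Take δ = +1, i.e. (ε₁,ε₂,ε₃) = (−1,1,1), S_X Y = g(X,Y)ξ − g(Y,ξ)X − Σ_a ε_a·(g(J_aY,ξ)J_aX − g(X,J_aY)J_aξ), R determined by g(R_{XY}W, U) = −g(ξ,ξ)·R⁰(X,Y,W,U), and R̃ := R − R^S. Then for all X, Y ∈ V: R̃_{XY}ξ = 0; R̃_{XY}(J₁ξ) = 4g(ξ,ξ)·(g(X,J₂Y)J₃ξ − g(X,J₃Y)J₂ξ); R̃_{XY}(J₂ξ) = 4g(ξ,ξ)·(g(X,J₁Y)J₃ξ − g(X,J₃Y)J₁ξ); R̃_{XY}(J₃ξ) = 4g(ξ,ξ)·(g(X,J₂Y)J₁ξ − g(X,J₁Y)J₂ξ); and for every Z ∈ V with g(Z,ξ) = g(Z,J₁ξ) = g(Z,J₂ξ) = g(Z,J₃ξ) = 0: R̃_{XY}Z = −2g(ξ,ξ)·Σ_a ε_a·g(X,J_aY)·J_aZ.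 -/
set_option maxHeartbeats 4000000 in
/-- action of `R̃ = R − R^S` on `ξ`, `J_aξ` and on `(H̃ξ)^⊥`
in the para-quaternion Kähler case (δ = +1).  Indices `0,1,2` of `Fin 3`
correspond to `1,2,3` of the paper. -/
theorem stmt_8
    {V : Type*} [AddCommGroup V] [Module ℝ V] [FiniteDimensional ℝ V]
    (ε : Fin 3 → ℝ) (hε : ε = ![-1, 1, 1])
    (g : V →ₗ[ℝ] V →ₗ[ℝ] ℝ)
    (hgsymm : ∀ X Y : V, g X Y = g Y X)
    (hgnd : ∀ X : V, (∀ Y : V, g X Y = 0) → X = 0)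
    (J : Fin 3 → V →ₗ[ℝ] V)
    (hJ2 : ∀ (a : Fin 3) (X : V), J a (J a X) = ε a • X)
    (hJ12 : ∀ X : V, J 0 (J 1 X) = J 2 X)
    (hJskew : ∀ (a : Fin 3) (X Y : V), g (J a X) Y = - g X (J a Y))
    (ξ : V) (S : V → V → V)
    (hS : ∀ X Y : V, S X Y =
      g X Y • ξ - g Y ξ • X
        - ∑ a : Fin 3, ε a • (g (J a Y) ξ • J a X - g X (J a Y) • J a ξ))
    (R0 : V → V → V → V → ℝ)
    (hR0 : ∀ X Y Z W : V, R0 X Y Z W =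
      g X Z * g Y W - g Y Z * g X W
        - ∑ a : Fin 3, ε a * (g (J a X) Z * g (J a Y) W
            - g (J a Y) Z * g (J a X) W + 2 * g X (J a Y) * g Z (J a W)))
    (R : V → V → V → V)
    (hR : ∀ X Y W U : V, g (R X Y W) U = -(g ξ ξ) * R0 X Y W U)
    (Rt : V → V → V → V)
    (hRt : ∀ X Y W : V, Rt X Y W =
      R X Y W - (S (S X Y - S Y X) W - S X (S Y W) + S Y (S X W))) :
    (∀ X Y : V, Rt X Y ξ = 0) ∧
    (∀ X Y : V, Rt X Y (J 0 ξ)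
        = (4 * g ξ ξ) • (g X (J 1 Y) • J 2 ξ - g X (J 2 Y) • J 1 ξ)) ∧
    (∀ X Y : V, Rt X Y (J 1 ξ)
        = (4 * g ξ ξ) • (g X (J 0 Y) • J 2 ξ - g X (J 2 Y) • J 0 ξ)) ∧
    (∀ X Y : V, Rt X Y (J 2 ξ)
        = (4 * g ξ ξ) • (g X (J 1 Y) • J 0 ξ - g X (J 0 Y) • J 1 ξ)) ∧
    (∀ X Y Z : V, g Z ξ = 0 → g Z (J 0 ξ) = 0 → g Z (J 1 ξ) = 0 →
      g Z (J 2 ξ) = 0 →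
      Rt X Y Z = (-(2 * g ξ ξ)) • ∑ a : Fin 3, (ε a * g X (J a Y)) • J a Z) := by
  subst hε
  have hJ00 : ∀ X : V, J 0 (J 0 X) = -X := by
    intro X; rw [hJ2]; norm_num
  have hJ11 : ∀ X : V, J 1 (J 1 X) = X := by
    intro X; rw [hJ2]; norm_num
  have hJ22 : ∀ X : V, J 2 (J 2 X) = X := by
    intro X; rw [hJ2]; exact one_smul ℝ X
  have hJ02 : ∀ X : V, J 0 (J 2 X) = -(J 1 X) := by
    intro X; rw [← hJ12, hJ00]
  have hJ21 : ∀ X : V, J 2 (J 1 X) = J 0 X := by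
    intro X; rw [← hJ12, hJ11]
  have hJ10 : ∀ X : V, J 1 (J 0 X) = -(J 2 X) := by
    intro X
    have h : ∀ Y : V, g (J 1 (J 0 X) + J 2 X) Y = 0 := by
      intro Y
      have h1 : g (J 1 (J 0 X)) Y = g X (J 2 Y) := by
        rw [hJskew, hJskew, hJ12]; ring
      have h2 : g (J 2 X) Y = - g X (J 2 Y) := hJskew 2 X Y
      simp [h1, h2]
    exact eq_neg_of_add_eq_zero_left (hgnd _ h)
  have hJ12v : ∀ X : V, J 1 (J 2 X) = -(J 0 X) := by
    intro X; rw [← hJ12, hJ10, hJ21]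
  have hJ20 : ∀ X : V, J 2 (J 0 X) = J 1 X := by
    intro X
    have h : J 1 (J 2 (J 0 X)) = X := by rw [hJ12v, hJ00, neg_neg]
    rw [← hJ11 (J 2 (J 0 X)), h]
  have hxi : ∀ a : Fin 3, g ξ (J a ξ) = 0 := by
    intro a
    have h1 := hJskew a ξ ξ
    have h2 := hgsymm (J a ξ) ξ
    linarith
  have orient : ∀ (A B : V) (a : Fin 3), g B (J a A) = -(g A (J a B)) := by
    intro A B a; rw [hgsymm, hJskew]
  refine ⟨?_, ?_, ?_, ?_, ?_⟩
  · intro X Y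
    apply hgnd
    intro U
    rw [hRt]
    simp only [hS]
    simp only [Fin.sum_univ_three, Matrix.cons_val_zero, Matrix.cons_val_one, Matrix.head_cons,
      Matrix.cons_val_two, Matrix.tail_cons, map_add, map_sub, map_neg, map_smul,
      LinearMap.add_apply, LinearMap.sub_apply, LinearMap.neg_apply, LinearMap.smul_apply,
      smul_eq_mul, neg_smul, one_smul, neg_neg]
    rw [hR, hR0]
    simp only [Fin.sum_univ_three, Matrix.cons_val_zero, Matrix.cons_val_one, Matrix.head_cons,
      Matrix.cons_val_two, Matrix.tail_cons, map_add, map_sub, map_neg, map_smul,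
      LinearMap.add_apply, LinearMap.sub_apply, LinearMap.neg_apply, LinearMap.smul_apply,
      smul_eq_mul, neg_smul, one_smul, neg_neg,
      hJskew, hJ00, hJ11, hJ22, hJ12, hJ02, hJ21, hJ10, hJ12v, hJ20, hxi, 
      orient X Y, orient X ξ, orient Y ξ, orient X U, orient Y U, orient ξ U,
      hgsymm Y X, hgsymm ξ X, hgsymm ξ Y, hgsymm U X, hgsymm U Y, hgsymm U ξ]
    ring
  · intro X Y
    refine sub_eq_zero.mp (hgnd _ fun U => ?_)
    rw [hRt]
    simp only [hS]
    simp only [Fin.sum_univ_three, Matrix.cons_val_zero, Matrix.cons_val_one, Matrix.head_cons,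
      Matrix.cons_val_two, Matrix.tail_cons, map_add, map_sub, map_neg, map_smul,
      LinearMap.add_apply, LinearMap.sub_apply, LinearMap.neg_apply, LinearMap.smul_apply,
      smul_eq_mul, neg_smul, one_smul, neg_neg]
    rw [hR, hR0]
    simp only [Fin.sum_univ_three, Matrix.cons_val_zero, Matrix.cons_val_one, Matrix.head_cons,
      Matrix.cons_val_two, Matrix.tail_cons, map_add, map_sub, map_neg, map_smul,
      LinearMap.add_apply, LinearMap.sub_apply, LinearMap.neg_apply, LinearMap.smul_apply,
      smul_eq_mul, neg_smul, one_smul, neg_neg,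
      hJskew, hJ00, hJ11, hJ22, hJ12, hJ02, hJ21, hJ10, hJ12v, hJ20, hxi, 
      orient X Y, orient X ξ, orient Y ξ, orient X U, orient Y U, orient ξ U,
      hgsymm Y X, hgsymm ξ X, hgsymm ξ Y, hgsymm U X, hgsymm U Y, hgsymm U ξ]
    ring
  · intro X Y
    refine sub_eq_zero.mp (hgnd _ fun U => ?_)
    rw [hRt]
    simp only [hS]
    simp only [Fin.sum_univ_three, Matrix.cons_val_zero, Matrix.cons_val_one, Matrix.head_cons,
      Matrix.cons_val_two, Matrix.tail_cons, map_add, map_sub, map_neg, map_smul,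
      LinearMap.add_apply, LinearMap.sub_apply, LinearMap.neg_apply, LinearMap.smul_apply,
      smul_eq_mul, neg_smul, one_smul, neg_neg]
    rw [hR, hR0]
    simp only [Fin.sum_univ_three, Matrix.cons_val_zero, Matrix.cons_val_one, Matrix.head_cons,
      Matrix.cons_val_two, Matrix.tail_cons, map_add, map_sub, map_neg, map_smul,
      LinearMap.add_apply, LinearMap.sub_apply, LinearMap.neg_apply, LinearMap.smul_apply,
      smul_eq_mul, neg_smul, one_smul, neg_neg,
      hJskew, hJ00, hJ11, hJ22, hJ12, hJ02, hJ21, hJ10, hJ12v, hJ20, hxi, 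
      orient X Y, orient X ξ, orient Y ξ, orient X U, orient Y U, orient ξ U,
      hgsymm Y X, hgsymm ξ X, hgsymm ξ Y, hgsymm U X, hgsymm U Y, hgsymm U ξ]
    ring
  · intro X Y
    refine sub_eq_zero.mp (hgnd _ fun U => ?_)
    rw [hRt]
    simp only [hS]
    simp only [Fin.sum_univ_three, Matrix.cons_val_zero, Matrix.cons_val_one, Matrix.head_cons,
      Matrix.cons_val_two, Matrix.tail_cons, map_add, map_sub, map_neg, map_smul,
      LinearMap.add_apply, LinearMap.sub_apply, LinearMap.neg_apply, LinearMap.smul_apply,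
      smul_eq_mul, neg_smul, one_smul, neg_neg]
    rw [hR, hR0]
    simp only [Fin.sum_univ_three, Matrix.cons_val_zero, Matrix.cons_val_one, Matrix.head_cons,
      Matrix.cons_val_two, Matrix.tail_cons, map_add, map_sub, map_neg, map_smul,
      LinearMap.add_apply, LinearMap.sub_apply, LinearMap.neg_apply, LinearMap.smul_apply,
      smul_eq_mul, neg_smul, one_smul, neg_neg,
      hJskew, hJ00, hJ11, hJ22, hJ12, hJ02, hJ21, hJ10, hJ12v, hJ20, hxi, 
      orient X Y, orient X ξ, orient Y ξ, orient X U, orient Y U, orient ξ U,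
      hgsymm Y X, hgsymm ξ X, hgsymm ξ Y, hgsymm U X, hgsymm U Y, hgsymm U ξ]
    ring
  · intro X Y Z hZ hZ0 hZ1 hZ2
    refine sub_eq_zero.mp (hgnd _ fun U => ?_)
    rw [hRt]
    simp only [hS]
    simp only [Fin.sum_univ_three, Matrix.cons_val_zero, Matrix.cons_val_one, Matrix.head_cons,
      Matrix.cons_val_two, Matrix.tail_cons, map_add, map_sub, map_neg, map_smul,
      LinearMap.add_apply, LinearMap.sub_apply, LinearMap.neg_apply, LinearMap.smul_apply,
      smul_eq_mul, neg_smul, one_smul, neg_neg]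
    rw [hR, hR0]
    simp only [Fin.sum_univ_three, Matrix.cons_val_zero, Matrix.cons_val_one, Matrix.head_cons,
      Matrix.cons_val_two, Matrix.tail_cons, map_add, map_sub, map_neg, map_smul,
      LinearMap.add_apply, LinearMap.sub_apply, LinearMap.neg_apply, LinearMap.smul_apply,
      smul_eq_mul, neg_smul, one_smul, neg_neg,
      hJskew, hJ00, hJ11, hJ22, hJ12, hJ02, hJ21, hJ10, hJ12v, hJ20, hxi, hZ, hZ0, hZ1, hZ2, orient X Z, orient Y Z, orient Z ξ, orient Z U, hgsymm Z X, hgsymm Z Y, hgsymm ξ Z, hgsymm U Z,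
      orient X Y, orient X ξ, orient Y ξ, orient X U, orient Y U, orient ξ U,
      hgsymm Y X, hgsymm ξ X, hgsymm ξ Y, hgsymm U X, hgsymm U Y, hgsymm U ξ]
    ring
end

section
/- Take δ = −1, i.e. (ε₁,ε₂,ε₃) = (−1,−1,−1), S_X Y = g(X,Y)ξ − g(Y,ξ)X − Σ_a ε_a·(g(J_aY,ξ)J_aX − g(X,J_aY)J_aξ), R determined by g(R_{XY}W, U) = −g(ξ,ξ)·R⁰(X,Y,W,U), and R̃ := R − R^S. Then for all X, Y ∈ V: R̃_{XY}ξ = 0; R̃_{XY}(J₁ξ) = −4g(ξ,ξ)·(g(J₃X,Y)J₂ξ − g(J₂X,Y)J₃ξ); R̃_{XY}(J₂ξ) = −4g(ξ,ξ)·(g(J₁X,Y)J₃ξ − g(J₃X,Y)J₁ξ); R̃_{XY}(J₃ξ) = −4g(ξ,ξ)·(g(J₂X,Y)J₁ξ − g(J₁X,Y)J₂ξ); and for every Z ∈ V with g(Z,ξ) = g(Z,J₁ξ) = g(Z,J₂ξ) = g(Z,J₃ξ) = 0: R̃_{XY}Z = −2g(ξ,ξ)·Σ_a g(J_aX,Y)·J_aZ.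 -/
set_option maxHeartbeats 4000000 in
/-- action of `R̃ = R − R^S` on `ξ`, `J_aξ` and on `(Hξ)^⊥`
in the pseudo-quaternion Kähler case (δ = −1).  Indices `0,1,2` of `Fin 3`
correspond to `1,2,3` of the paper. -/
theorem stmt_11
    {V : Type*} [AddCommGroup V] [Module ℝ V] [FiniteDimensional ℝ V]
    (ε : Fin 3 → ℝ) (hε : ε = ![-1, -1, -1])
    (g : V →ₗ[ℝ] V →ₗ[ℝ] ℝ)
    (hgsymm : ∀ X Y : V, g X Y = g Y X)
    (hgnd : ∀ X : V, (∀ Y : V, g X Y = 0) → X = 0)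
    (J : Fin 3 → V →ₗ[ℝ] V)
    (hJ2 : ∀ (a : Fin 3) (X : V), J a (J a X) = ε a • X)
    (hJ12 : ∀ X : V, J 0 (J 1 X) = J 2 X)
    (hJskew : ∀ (a : Fin 3) (X Y : V), g (J a X) Y = - g X (J a Y))
    (ξ : V) (S : V → V → V)
    (hS : ∀ X Y : V, S X Y =
      g X Y • ξ - g Y ξ • X
        - ∑ a : Fin 3, ε a • (g (J a Y) ξ • J a X - g X (J a Y) • J a ξ))
    (R0 : V → V → V → V → ℝ)
    (hR0 : ∀ X Y Z W : V, R0 X Y Z W =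
      g X Z * g Y W - g Y Z * g X W
        - ∑ a : Fin 3, ε a * (g (J a X) Z * g (J a Y) W
            - g (J a Y) Z * g (J a X) W + 2 * g X (J a Y) * g Z (J a W)))
    (R : V → V → V → V)
    (hR : ∀ X Y W U : V, g (R X Y W) U = -(g ξ ξ) * R0 X Y W U)
    (Rt : V → V → V → V)
    (hRt : ∀ X Y W : V, Rt X Y W =
      R X Y W - (S (S X Y - S Y X) W - S X (S Y W) + S Y (S X W))) :
    (∀ X Y : V, Rt X Y ξ = 0) ∧
    (∀ X Y : V, Rt X Y (J 0 ξ)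
        = (-(4 * g ξ ξ)) • (g (J 2 X) Y • J 1 ξ - g (J 1 X) Y • J 2 ξ)) ∧
    (∀ X Y : V, Rt X Y (J 1 ξ)
        = (-(4 * g ξ ξ)) • (g (J 0 X) Y • J 2 ξ - g (J 2 X) Y • J 0 ξ)) ∧
    (∀ X Y : V, Rt X Y (J 2 ξ)
        = (-(4 * g ξ ξ)) • (g (J 1 X) Y • J 0 ξ - g (J 0 X) Y • J 1 ξ)) ∧
    (∀ X Y Z : V, g Z ξ = 0 → g Z (J 0 ξ) = 0 → g Z (J 1 ξ) = 0 →
      g Z (J 2 ξ) = 0 →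
      Rt X Y Z = (-(2 * g ξ ξ)) • ∑ a : Fin 3, g (J a X) Y • J a Z) := by
  have hεa : ∀ a : Fin 3, ε a = -1 := by intro a; fin_cases a <;> simp [hε]
  have t00 : ∀ X : V, J 0 (J 0 X) = -X := fun X => by rw [hJ2, hεa, neg_one_smul]
  have t11 : ∀ X : V, J 1 (J 1 X) = -X := fun X => by rw [hJ2, hεa, neg_one_smul]
  have t22 : ∀ X : V, J 2 (J 2 X) = -X := fun X => by rw [hJ2, hεa, neg_one_smul]
  have t01 : ∀ X : V, J 0 (J 1 X) = J 2 X := hJ12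
  have t02 : ∀ X : V, J 0 (J 2 X) = -(J 1 X) := by
    intro X; rw [← hJ12, t00]
  have h2 : ∀ X : V, J 1 (J 0 (J 1 X)) = J 0 X := by
    intro X
    have h1 : J 0 (J 1 (J 0 (J 1 X))) = -X := by rw [hJ12, hJ12, t22]
    have := congrArg (J 0) h1
    rw [t00, map_neg] at this
    exact neg_injective this
  have t10 : ∀ X : V, J 1 (J 0 X) = -(J 2 X) := by
    intro X
    have := h2 (J 1 X)
    rw [t11, map_neg, map_neg, hJ12] at this
    rw [← this, neg_neg]
  have t20 : ∀ X : V, J 2 (J 0 X) = J 1 X := by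
    intro X
    rw [← hJ12 (J 0 X), t10, map_neg, t02, neg_neg]
  have t12 : ∀ X : V, J 1 (J 2 X) = J 0 X := by
    intro X; rw [← hJ12, h2]
  have t21 : ∀ X : V, J 2 (J 1 X) = -(J 0 X) := by
    intro X; rw [← hJ12 (J 1 X), t11, map_neg]
  have gξJ : ∀ a : Fin 3, g ξ (J a ξ) = 0 := by
    intro a
    have h := hJskew a ξ ξ
    rw [hgsymm (J a ξ) ξ] at h
    linarith
  have hRv : ∀ X Y W : V, R X Y W =
      (-(g ξ ξ)) • (g X W • Y - g Y W • X
        - ∑ a : Fin 3, ε a • (g (J a X) W • J a Y - g (J a Y) W • J a X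
            - (2 * g X (J a Y)) • J a W)) := by
    intro X Y W
    refine sub_eq_zero.mp (hgnd _ fun U => ?_)
    rw [map_sub, LinearMap.sub_apply, hR, hR0, sub_eq_zero]
    simp only [Fin.sum_univ_three, hεa, map_smul, map_sub, map_add, map_neg,
      LinearMap.smul_apply, LinearMap.sub_apply, LinearMap.add_apply, LinearMap.neg_apply,
      smul_eq_mul, hJskew]
    ring
  refine ⟨?_, ?_, ?_, ?_, ?_⟩
  · intro X Y
    have sXY : ∀ a : Fin 3, g Y (J a X) = -(g X (J a Y)) := fun a => by
      rw [hgsymm, hJskew]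
    have sXξ : ∀ a : Fin 3, g ξ (J a X) = -(g X (J a ξ)) := fun a => by
      rw [hgsymm, hJskew]
    have sYξ : ∀ a : Fin 3, g ξ (J a Y) = -(g Y (J a ξ)) := fun a => by
      rw [hgsymm, hJskew]
    rw [hRt, hRv]
    simp only [hS, Fin.sum_univ_three, hεa, map_add, map_sub, map_neg, map_smul, smul_eq_mul,
      LinearMap.add_apply, LinearMap.sub_apply, LinearMap.neg_apply, LinearMap.smul_apply,
      t00, t11, t22, t01, t02, t10, t12, t20, t21, hJskew, gξJ,
      sXY, sXξ, sYξ, hgsymm Y X, hgsymm ξ X, hgsymm ξ Y]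
    module
  · intro X Y
    have sXY : ∀ a : Fin 3, g Y (J a X) = -(g X (J a Y)) := fun a => by
      rw [hgsymm, hJskew]
    have sXξ : ∀ a : Fin 3, g ξ (J a X) = -(g X (J a ξ)) := fun a => by
      rw [hgsymm, hJskew]
    have sYξ : ∀ a : Fin 3, g ξ (J a Y) = -(g Y (J a ξ)) := fun a => by
      rw [hgsymm, hJskew]
    rw [hRt, hRv]
    simp only [hS, Fin.sum_univ_three, hεa, map_add, map_sub, map_neg, map_smul, smul_eq_mul,
      LinearMap.add_apply, LinearMap.sub_apply, LinearMap.neg_apply, LinearMap.smul_apply,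
      t00, t11, t22, t01, t02, t10, t12, t20, t21, hJskew, gξJ,
      sXY, sXξ, sYξ, hgsymm Y X, hgsymm ξ X, hgsymm ξ Y]
    module
  · intro X Y
    have sXY : ∀ a : Fin 3, g Y (J a X) = -(g X (J a Y)) := fun a => by
      rw [hgsymm, hJskew]
    have sXξ : ∀ a : Fin 3, g ξ (J a X) = -(g X (J a ξ)) := fun a => by
      rw [hgsymm, hJskew]
    have sYξ : ∀ a : Fin 3, g ξ (J a Y) = -(g Y (J a ξ)) := fun a => by
      rw [hgsymm, hJskew]
    rw [hRt, hRv]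
    simp only [hS, Fin.sum_univ_three, hεa, map_add, map_sub, map_neg, map_smul, smul_eq_mul,
      LinearMap.add_apply, LinearMap.sub_apply, LinearMap.neg_apply, LinearMap.smul_apply,
      t00, t11, t22, t01, t02, t10, t12, t20, t21, hJskew, gξJ,
      sXY, sXξ, sYξ, hgsymm Y X, hgsymm ξ X, hgsymm ξ Y]
    module
  · intro X Y
    have sXY : ∀ a : Fin 3, g Y (J a X) = -(g X (J a Y)) := fun a => by
      rw [hgsymm, hJskew]
    have sXξ : ∀ a : Fin 3, g ξ (J a X) = -(g X (J a ξ)) := fun a => by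
      rw [hgsymm, hJskew]
    have sYξ : ∀ a : Fin 3, g ξ (J a Y) = -(g Y (J a ξ)) := fun a => by
      rw [hgsymm, hJskew]
    rw [hRt, hRv]
    simp only [hS, Fin.sum_univ_three, hεa, map_add, map_sub, map_neg, map_smul, smul_eq_mul,
      LinearMap.add_apply, LinearMap.sub_apply, LinearMap.neg_apply, LinearMap.smul_apply,
      t00, t11, t22, t01, t02, t10, t12, t20, t21, hJskew, gξJ,
      sXY, sXξ, sYξ, hgsymm Y X, hgsymm ξ X, hgsymm ξ Y]
    module
  · intro X Y Z hZ0 hZ1 hZ2 hZ3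
    have hZJ : ∀ a : Fin 3, g Z (J a ξ) = 0 := by
      intro a; fin_cases a <;> assumption
    have sXY : ∀ a : Fin 3, g Y (J a X) = -(g X (J a Y)) := fun a => by
      rw [hgsymm, hJskew]
    have sXξ : ∀ a : Fin 3, g ξ (J a X) = -(g X (J a ξ)) := fun a => by
      rw [hgsymm, hJskew]
    have sYξ : ∀ a : Fin 3, g ξ (J a Y) = -(g Y (J a ξ)) := fun a => by
      rw [hgsymm, hJskew]
    have sXZ : ∀ a : Fin 3, g Z (J a X) = -(g X (J a Z)) := fun a => by
      rw [hgsymm, hJskew]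
    have sYZ : ∀ a : Fin 3, g Z (J a Y) = -(g Y (J a Z)) := fun a => by
      rw [hgsymm, hJskew]
    have sZξ : ∀ a : Fin 3, g ξ (J a Z) = 0 := fun a => by
      rw [hgsymm, hJskew, hZJ, neg_zero]
    have hξZ : g ξ Z = 0 := by rw [hgsymm]; exact hZ0
    rw [hRt, hRv]
    simp only [hS, Fin.sum_univ_three, hεa, map_add, map_sub, map_neg, map_smul, smul_eq_mul,
      LinearMap.add_apply, LinearMap.sub_apply, LinearMap.neg_apply, LinearMap.smul_apply,
      t00, t11, t22, t01, t02, t10, t12, t20, t21, hJskew, gξJ, hZJ, hZ0, sZξ, hξZ,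
      sXY, sXξ, sYξ, sXZ, sYZ, hgsymm Y X, hgsymm ξ X, hgsymm ξ Y,
      hgsymm Z X, hgsymm Z Y]
    module
end

section
/- Let R : V⁴ → ℝ be a multilinear map satisfying the algebraic curvature symmetries: R(X,Y,Z,W) = −R(Y,X,Z,W) = −R(X,Y,W,Z), R(X,Y,Z,W) = R(Z,W,X,Y), and the first Bianchi identity R(X,Y,Z,W) + R(Y,Z,X,W) + R(Z,X,Y,W) = 0. Assume R is of type 𝔰𝔭^ε(n), i.e. R(J_aX,Y,Z,W) + R(X,J_aY,Z,W) = 0 for a = 1,2,3 and all X,Y,Z,W. Let ξ ∈ V with g(ξ,ξ) ≠ 0 and set θ = g(ξ,·). If for all W, U ∈ V the cyclic sums over (X,Y,Z) satisfy θ(X)R(Y,Z,W,U) + θ(Y)R(Z,X,W,U) + θ(Z)R(X,Y,W,U) = 0 and, for each a = 1,2,3, θ(J_aX)R(Y,Z,W,U) + θ(J_aY)R(Z,X,W,U) + θ(J_aZ)R(X,Y,W,U) = 0, then R = 0. -/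
/-- an algebraic curvature tensor of type `𝔰𝔭^ε(n)` satisfying
the two wedge (cyclic) conditions with a non-null vector `ξ` must vanish. -/
theorem stmt_12
    {V : Type*} [AddCommGroup V] [Module ℝ V] [FiniteDimensional ℝ V]
    (n : ℕ) (hn : 2 ≤ n) (hdim : Module.finrank ℝ V = 4 * n)
    (δ : ℝ) (hδ : δ = -1 ∨ δ = 1)
    (ε : Fin 3 → ℝ) (hε : ε = ![-1, δ, δ])
    (g : V →ₗ[ℝ] V →ₗ[ℝ] ℝ)
    (hgsymm : ∀ X Y : V, g X Y = g Y X)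
    (hgnd : ∀ X : V, (∀ Y : V, g X Y = 0) → X = 0)
    (J : Fin 3 → V →ₗ[ℝ] V)
    (hJ2 : ∀ (a : Fin 3) (X : V), J a (J a X) = ε a • X)
    (hJ12 : ∀ X : V, J 0 (J 1 X) = J 2 X)
    (hJskew : ∀ (a : Fin 3) (X Y : V), g (J a X) Y = - g X (J a Y))
    (R : V →ₗ[ℝ] V →ₗ[ℝ] V →ₗ[ℝ] V →ₗ[ℝ] ℝ)
    (hR1 : ∀ X Y Z W : V, R X Y Z W = - R Y X Z W)
    (hR2 : ∀ X Y Z W : V, R X Y Z W = - R X Y W Z)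
    (hR3 : ∀ X Y Z W : V, R X Y Z W = R Z W X Y)
    (hBianchi : ∀ X Y Z W : V, R X Y Z W + R Y Z X W + R Z X Y W = 0)
    (hsp : ∀ (a : Fin 3) (X Y Z W : V),
      R (J a X) Y Z W + R X (J a Y) Z W = 0)
    (ξ : V) (hξ : g ξ ξ ≠ 0)
    (hcyc : ∀ X Y Z W U : V,
      g ξ X * R Y Z W U + g ξ Y * R Z X W U + g ξ Z * R X Y W U = 0)
    (hcycJ : ∀ (a : Fin 3) (X Y Z W U : V),
      g ξ (J a X) * R Y Z W U + g ξ (J a Y) * R Z X W U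
        + g ξ (J a Z) * R X Y W U = 0) :
    ∀ X Y Z W : V, R X Y Z W = 0 := by
  -- abbreviation
  set c := g ξ ξ with hc
  have hδ0 : δ ≠ 0 := by rcases hδ with h | h <;> rw [h] <;> norm_num
  have hε0 : ε 0 = -1 := by rw [hε]; rfl
  have hε1 : ε 1 = δ := by rw [hε]; rfl
  -- g ξ (J a ξ) = 0
  have h0 : ∀ a : Fin 3, g ξ (J a ξ) = 0 := by
    intro a
    have h1 := hJskew a ξ ξ
    have h2 := hgsymm (J a ξ) ξ
    linarith [h1, h2]
  -- symmetry of g ξ (J b (J a ξ)) in a, b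
  have hsym : ∀ a b : Fin 3, g ξ (J b (J a ξ)) = g ξ (J a (J b ξ)) := by
    intro a b
    have h1 : g (J b ξ) (J a ξ) = - g ξ (J b (J a ξ)) := hJskew b ξ (J a ξ)
    have h2 : g (J a ξ) (J b ξ) = - g ξ (J a (J b ξ)) := hJskew a ξ (J b ξ)
    have h3 := hgsymm (J b ξ) (J a ξ)
    linarith [h1, h2, h3]
  -- mixed products vanish
  have h10 : g ξ (J 0 (J 1 ξ)) = 0 := by rw [hJ12]; exact h0 2
  have h01 : g ξ (J 1 (J 0 ξ)) = 0 := by rw [hsym 0 1]; exact h10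
  have h02 : g ξ (J 0 (J 2 ξ)) = 0 := by
    have : J 0 (J 2 ξ) = (-1 : ℝ) • J 1 ξ := by
      rw [← hJ12 ξ, hJ2 0 (J 1 ξ), hε0]
    rw [this, map_smul]
    simp [h0 1]
  -- g ξ (J a (J a ξ)) = ε a * c
  have hsq : ∀ a : Fin 3, g ξ (J a (J a ξ)) = ε a * c := by
    intro a
    rw [hJ2 a ξ, map_smul]
    simp [smul_eq_mul, hc]
  -- Step A : R (J a ξ) ξ W U = 0 for each a
  have stepA : ∀ (a : Fin 3) (W U : V), R (J a ξ) ξ W U = 0 := by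
    intro a W U
    -- choose b with g ξ (J b (J a ξ)) = 0 : b = 1 for a = 0, b = 0 otherwise
    fin_cases a
    · have h := hcycJ 1 (J 0 ξ) ξ (J 1 ξ) W U
      rw [h01, h0 1, hsq 1, hε1] at h
      have hδc : δ * c ≠ 0 := mul_ne_zero hδ0 hξ
      simp only [zero_mul, zero_add, add_zero] at h
      exact (mul_eq_zero.mp h).resolve_left hδc
    · have h := hcycJ 0 (J 1 ξ) ξ (J 0 ξ) W U
      rw [h10, h0 0, hsq 0, hε0] at h
      simp only [zero_mul, zero_add, add_zero, neg_one_mul, neg_mul, one_mul] at h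
      have := neg_eq_zero.mp h
      exact (mul_eq_zero.mp this).resolve_left hξ
    · have h := hcycJ 0 (J 2 ξ) ξ (J 0 ξ) W U
      rw [h02, h0 0, hsq 0, hε0] at h
      simp only [zero_mul, zero_add, add_zero, neg_one_mul, neg_mul, one_mul] at h
      have := neg_eq_zero.mp h
      exact (mul_eq_zero.mp this).resolve_left hξ
  -- Step B : R ξ Y W U = 0
  have stepB : ∀ Y W U : V, R ξ Y W U = 0 := by
    intro Y W U
    have h := hcycJ 0 ξ Y (J 0 ξ) W U
    rw [h0 0, hsq 0, hε0, stepA 0 W U] at h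
    simp only [zero_mul, mul_zero, zero_add, add_zero, neg_one_mul, neg_mul, one_mul] at h
    have := neg_eq_zero.mp h
    exact (mul_eq_zero.mp this).resolve_left hξ
  -- Step C : conclusion
  intro X Y W U
  have h := hcyc X Y ξ W U
  have hYξ : R Y ξ W U = 0 := by rw [hR1]; rw [stepB Y W U]; ring
  rw [hYξ, stepB X W U] at h
  simp only [mul_zero, zero_add, add_zero] at h
  exact (mul_eq_zero.mp h).resolve_left hξ
end

section
/- Let V be a real vector space, g a nondegenerate symmetric bilinear form on V, and ξ ∈ V with g(ξ,ξ) ≠ 0; set θ = g(ξ,·). Let A : V⁴ → ℝ be a multilinear map that is antisymmetric in its first two arguments, satisfies the pair symmetry A(X,Y,Z,W) = A(Z,W,X,Y), satisfies A(Y,Z,ξ,W) = 0 for all Y, Z, W ∈ V, and satisfies, for all W, U ∈ V, the cyclic identity θ(X)A(Y,Z,W,U) + θ(Y)A(Z,X,W,U) + θ(Z)A(X,Y,W,U) = 0. Then A = 0. -/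
/-- the concluding algebraic step of the constant holomorphic
curvature theorem: a pair-symmetric tensor, antisymmetric in its first two
arguments, vanishing whenever `ξ` occupies the third slot and satisfying the
cyclic identity with the non-null vector `ξ`, must vanish. -/
theorem stmt_13
    {V : Type*} [AddCommGroup V] [Module ℝ V]
    (g : V →ₗ[ℝ] V →ₗ[ℝ] ℝ)
    (hgsymm : ∀ X Y : V, g X Y = g Y X)
    (hgnd : ∀ X : V, (∀ Y : V, g X Y = 0) → X = 0)
    (ξ : V) (hξ : g ξ ξ ≠ 0)
    (A : V →ₗ[ℝ] V →ₗ[ℝ] V →ₗ[ℝ] V →ₗ[ℝ] ℝ)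
    (hA1 : ∀ X Y Z W : V, A X Y Z W = - A Y X Z W)
    (hA2 : ∀ X Y Z W : V, A X Y Z W = A Z W X Y)
    (hA3 : ∀ Y Z W : V, A Y Z ξ W = 0)
    (hcyc : ∀ X Y Z W U : V,
      g ξ X * A Y Z W U + g ξ Y * A Z X W U + g ξ Z * A X Y W U = 0) :
    ∀ X Y Z W : V, A X Y Z W = 0 := by
  intro X Y Z W
  have h := hcyc ξ X Y Z W
  have h1 : A ξ X Z W = 0 := by rw [hA2, hA3]
  have h2 : A Y ξ Z W = 0 := by rw [hA1, hA2, hA3]; ring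
  rw [h1, h2] at h
  have : g ξ ξ * A X Y Z W = 0 := by linarith
  exact (mul_eq_zero.mp this).resolve_left hξ
end

section
/- Let A : V → V be a linear map that is skew with respect to g, i.e. g(AX,Y) + g(X,AY) = 0 for all X, Y, and such that for each a = 1,2,3 the commutator A∘J_a − J_a∘A lies in the real span of {J₁, J₂, J₃} (i.e. A ∈ 𝔰𝔭^ε(n) + 𝔰𝔭^ε(1)). Then A annihilates R⁰ as a derivation: for all X, Y, Z, W ∈ V, R⁰(AX,Y,Z,W) + R⁰(X,AY,Z,W) + R⁰(X,Y,AZ,W) + R⁰(X,Y,Z,AW) = 0. -/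
/-- any `g`-skew endomorphism `A` whose commutator with each
`J_a` lies in the span of `{J₁, J₂, J₃}` (i.e. `A ∈ 𝔰𝔭^ε(n) + 𝔰𝔭^ε(1)`)
annihilates the model tensor `R⁰` as a derivation. -/
theorem stmt_15
    {V : Type*} [AddCommGroup V] [Module ℝ V] [FiniteDimensional ℝ V]
    (δ : ℝ) (hδ : δ = -1 ∨ δ = 1)
    (ε : Fin 3 → ℝ) (hε : ε = ![-1, δ, δ])
    (g : V →ₗ[ℝ] V →ₗ[ℝ] ℝ)
    (hgsymm : ∀ X Y : V, g X Y = g Y X)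
    (hgnd : ∀ X : V, (∀ Y : V, g X Y = 0) → X = 0)
    (J : Fin 3 → V →ₗ[ℝ] V)
    (hJ2 : ∀ (a : Fin 3) (X : V), J a (J a X) = ε a • X)
    (hJ12 : ∀ X : V, J 0 (J 1 X) = J 2 X)
    (hJskew : ∀ (a : Fin 3) (X Y : V), g (J a X) Y = - g X (J a Y))
    (R0 : V → V → V → V → ℝ)
    (hR0 : ∀ X Y Z W : V, R0 X Y Z W =
      g X Z * g Y W - g Y Z * g X W
        - ∑ a : Fin 3, ε a * (g (J a X) Z * g (J a Y) W
            - g (J a Y) Z * g (J a X) W + 2 * g X (J a Y) * g Z (J a W)))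
    (A : V →ₗ[ℝ] V)
    (hAskew : ∀ X Y : V, g (A X) Y + g X (A Y) = 0)
    (hAcomm : ∀ a : Fin 3,
      A ∘ₗ J a - J a ∘ₗ A ∈ Submodule.span ℝ ({J 0, J 1, J 2} : Set (V →ₗ[ℝ] V))) :
    ∀ X Y Z W : V,
      R0 (A X) Y Z W + R0 X (A Y) Z W + R0 X Y (A Z) W + R0 X Y Z (A W) = 0 := by
  subst hε
  have hδ2 : δ * δ = 1 := by rcases hδ with rfl | rfl <;> norm_num
  have hδ0 : δ ≠ 0 := by rcases hδ with rfl | rfl <;> norm_num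
  intro X Y Z W
  by_cases hV : ∃ v : V, v ≠ 0
  case neg =>
    push_neg at hV
    have hg : ∀ U U' : V, g U U' = 0 := fun U U' => by rw [hV U]; simp
    simp [hR0, hg]
  case pos =>
  -- basic squares
  have hJ0 : ∀ X : V, J 0 (J 0 X) = -X := fun X => by
    have h := hJ2 0 X
    simpa using h
  have hJ1 : ∀ X : V, J 1 (J 1 X) = δ • X := fun X => by
    have h := hJ2 1 X
    simpa using h
  have hJ2c : ∀ X : V, J 2 (J 2 X) = δ • X := fun X => by
    have h := hJ2 2 X
    simpa using h
  -- multiplication table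
  have h02 : ∀ X : V, J 0 (J 2 X) = -J 1 X := fun X => by
    rw [← hJ12 X, hJ0]
  have h21 : ∀ X : V, J 2 (J 1 X) = δ • J 0 X := fun X => by
    rw [← hJ12, hJ1, map_smul]
  have h12 : ∀ X : V, J 1 (J 2 X) = -(δ • J 0 X) := by
    intro X
    have h1 : J 0 (J 1 (J 2 X)) = δ • X := by rw [hJ12]; exact hJ2c X
    have h2 := congrArg (J 0) h1
    rw [hJ0, map_smul] at h2
    rw [← h2, neg_neg]
  have h10 : ∀ X : V, J 1 (J 0 X) = -J 2 X := by
    intro X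
    have h1 : J 1 (J 2 (J 1 X)) = -(δ • J 0 (J 1 X)) := h12 (J 1 X)
    rw [h21, map_smul, hJ12] at h1
    have h2 := congrArg (fun v : V => δ • v) h1
    simp only [smul_neg, smul_smul, hδ2, one_smul] at h2
    exact h2
  have h20 : ∀ X : V, J 2 (J 0 X) = J 1 X := fun X => by
    rw [← hJ12, h10, map_neg, h02, neg_neg]
  -- coefficients of the commutators
  have hspan : ∀ a : Fin 3, ∃ u v w : ℝ,
      A ∘ₗ J a - J a ∘ₗ A = u • J 0 + v • J 1 + w • J 2 := by
    intro a
    have h := hAcomm a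
    rw [show ({J 0, J 1, J 2} : Set (V →ₗ[ℝ] V)) = insert (J 0) (insert (J 1) {J 2}) from rfl,
      Submodule.mem_span_insert] at h
    obtain ⟨u, z1, hz1, he1⟩ := h
    rw [Submodule.mem_span_insert] at hz1
    obtain ⟨v, z2, hz2, he2⟩ := hz1
    rw [Submodule.mem_span_singleton] at hz2
    obtain ⟨w, hw⟩ := hz2
    exact ⟨u, v, w, by rw [he1, he2, ← hw, add_assoc]⟩
  choose c0 c1 c2 hc using hspan
  have hJA : ∀ (a : Fin 3) (X : V),
      A (J a X) = J a (A X) + c0 a • J 0 X + c1 a • J 1 X + c2 a • J 2 X := by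
    intro a X
    have h := LinearMap.congr_fun (hc a) X
    simp only [LinearMap.sub_apply, LinearMap.comp_apply, LinearMap.add_apply,
      LinearMap.smul_apply] at h
    have h' := sub_eq_iff_eq_add.mp h
    rw [h']
    module
  -- scalar extraction helpers
  have hptzero : ∀ t : ℝ, (∀ X : V, t • X = 0) → t = 0 := by
    intro t h
    obtain ⟨v, hv⟩ := hV
    rcases smul_eq_zero.mp (h v) with h' | h'
    · exact h'
    · exact absurd h' hv
  have horth : ∀ (a : Fin 3) (U : V), g (J a U) U = 0 := by
    intro a U
    have h1 := hJskew a U U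
    have h2 := hgsymm U (J a U)
    linarith
  have hzero : ∀ t x y z : ℝ,
      (∀ X : V, t • X + x • J 0 X + y • J 1 X + z • J 2 X = 0) → t = 0 := by
    intro t x y z h
    have hq : ∀ U : V, t * g U U = 0 := by
      intro U
      have h2 : g (t • U + x • J 0 U + y • J 1 U + z • J 2 U) U = 0 := by rw [h U]; simp
      simp only [map_add, map_smul, LinearMap.add_apply, LinearMap.smul_apply,
        smul_eq_mul] at h2
      rw [horth 0, horth 1, horth 2] at h2
      linarith
    have hb : ∀ U U' : V, t * g U U' = 0 := by
      intro U U'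
      have h2 := hq (U + U')
      simp only [map_add, LinearMap.add_apply] at h2
      rw [hgsymm U' U] at h2
      linear_combination h2 / 2 - hq U / 2 - hq U' / 2
    obtain ⟨v, hv⟩ := hV
    by_contra ht
    exact hv (hgnd v fun Y' => by
      rcases mul_eq_zero.mp (hb v Y') with h' | h'
      · exact absurd h' ht
      · exact h')
  have hext : ∀ t x y z : ℝ,
      (∀ X : V, t • X + x • J 0 X + y • J 1 X + z • J 2 X = 0) →
      t = 0 ∧ x = 0 ∧ y = 0 ∧ z = 0 := by
    intro t x y z h
    have ht := hzero t x y z h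
    have hx : x = 0 := by
      have h' : ∀ X : V, (-x) • X + t • J 0 X + z • J 1 X + (-y) • J 2 X = 0 := by
        intro X
        have hh := h (J 0 X)
        rw [hJ0, h10, h20] at hh
        rw [← hh]; module
      have := hzero (-x) t z (-y) h'
      linarith
    have hy : y = 0 := by
      have h' : ∀ X : V, (δ * y) • X + (δ * z) • J 0 X + t • J 1 X + x • J 2 X = 0 := by
        intro X
        have hh := h (J 1 X)
        rw [hJ1, hJ12, h21] at hh
        rw [← hh]; module
      have := hzero (δ * y) (δ * z) t x h'
      rcases mul_eq_zero.mp this with h'' | h''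
      · exact absurd h'' hδ0
      · exact h''
    have hz : z = 0 := by
      have h' : ∀ X : V, (δ * z) • X + (-(δ * y)) • J 0 X + (-x) • J 1 X + t • J 2 X = 0 := by
        intro X
        have hh := h (J 2 X)
        rw [h02, h12, hJ2c] at hh
        rw [← hh]; module
      have := hzero (δ * z) (-(δ * y)) (-x) t h'
      rcases mul_eq_zero.mp this with h'' | h''
      · exact absurd h'' hδ0
      · exact h''
    exact ⟨ht, hx, hy, hz⟩
  -- diagonal coefficients vanish
  have hc00 : c0 0 = 0 := by
    have h' : ∀ X : V, (-(2 * c0 0)) • X = 0 := by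
      intro X
      have w1 : A (J 0 (J 0 X)) = -(A X) + (-(2 * c0 0)) • X := by
        rw [hJA 0 (J 0 X), hJA 0 X]
        simp only [map_add, map_smul, hJ0, hJ1, hJ2c, hJ12, h10, h20, h02, h21, h12]
        module
      have w2 : A (J 0 (J 0 X)) = -(A X) := by rw [hJ0, map_neg]
      exact add_eq_left.mp (w1.symm.trans w2)
    have := hptzero _ h'
    linarith
  have hc11 : c1 1 = 0 := by
    have h' : ∀ X : V, (2 * δ * c1 1) • X = 0 := by
      intro X
      have w1 : A (J 1 (J 1 X)) = δ • A X + (2 * δ * c1 1) • X := by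
        rw [hJA 1 (J 1 X), hJA 1 X]
        simp only [map_add, map_smul, hJ0, hJ1, hJ2c, hJ12, h10, h20, h02, h21, h12]
        module
      have w2 : A (J 1 (J 1 X)) = δ • A X := by rw [hJ1, map_smul]
      exact add_eq_left.mp (w1.symm.trans w2)
    have := hptzero _ h'
    rcases hδ with rfl | rfl <;> linarith
  have hc22 : c2 2 = 0 := by
    have h' : ∀ X : V, (2 * δ * c2 2) • X = 0 := by
      intro X
      have w1 : A (J 2 (J 2 X)) = δ • A X + (2 * δ * c2 2) • X := by
        rw [hJA 2 (J 2 X), hJA 2 X]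
        simp only [map_add, map_smul, hJ0, hJ1, hJ2c, hJ12, h10, h20, h02, h21, h12]
        module
      have w2 : A (J 2 (J 2 X)) = δ • A X := by rw [hJ2c, map_smul]
      exact add_eq_left.mp (w1.symm.trans w2)
    have := hptzero _ h'
    rcases hδ with rfl | rfl <;> linarith
  -- off-diagonal relations from J0 J1 = J2
  have k3 : ∀ X : V, (δ * c1 0 - c0 1) • X + (δ * c2 0 - c0 2) • J 0 X
      + (-(c2 1) - c1 2) • J 1 X + (c0 0 + c1 1 - c2 2) • J 2 X = 0 := by
    intro X
    have w1 : A (J 0 (J 1 X)) = J 2 (A X) + (δ * c1 0 - c0 1) • X + (δ * c2 0) • J 0 X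
        + (-(c2 1)) • J 1 X + (c1 1 + c0 0) • J 2 X := by
      rw [hJA 0 (J 1 X), hJA 1 X]
      simp only [map_add, map_smul, hJ0, hJ1, hJ2c, hJ12, h10, h20, h02, h21, h12]
      module
    have w2 : A (J 0 (J 1 X)) = J 2 (A X) + c0 2 • J 0 X + c1 2 • J 1 X + c2 2 • J 2 X := by
      rw [hJ12]; exact hJA 2 X
    have w3 := w1.symm.trans w2
    have key : (δ * c1 0 - c0 1) • X + (δ * c2 0 - c0 2) • J 0 X
        + (-(c2 1) - c1 2) • J 1 X + (c0 0 + c1 1 - c2 2) • J 2 X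
        = (J 2 (A X) + (δ * c1 0 - c0 1) • X + (δ * c2 0) • J 0 X
            + (-(c2 1)) • J 1 X + (c1 1 + c0 0) • J 2 X)
          - (J 2 (A X) + c0 2 • J 0 X + c1 2 • J 1 X + c2 2 • J 2 X) := by
      module
    rw [key, w3, sub_self]
  obtain ⟨e1, e2, e3, -⟩ := hext _ _ _ _ k3
  have r10 : c1 0 = δ * c0 1 := by linear_combination δ * e1 - c1 0 * hδ2
  have r20 : c2 0 = δ * c0 2 := by linear_combination δ * e2 - c2 0 * hδ2
  have r12 : c1 2 = -(c2 1) := by linarith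
  -- scalar rewriting lemmas
  have hL3 : ∀ U U' : V, g (A U) U' = -g U (A U') := fun U U' => by linarith [hAskew U U']
  have hL2 : ∀ (a : Fin 3) (U U' : V), g U (J a U') = -g (J a U) U' := fun a U U' => by
    linarith [hJskew a U U']
  have hL1 : ∀ (a : Fin 3) (U U' : V), g (J a (A U)) U' =
      -g (J a U) (A U')
        - (c0 a * g (J 0 U) U' + c1 a * g (J 1 U) U' + c2 a * g (J 2 U) U') := by
    intro a U U'
    have h1 : J a (A U) = A (J a U) - (c0 a • J 0 U + c1 a • J 1 U + c2 a • J 2 U) := by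
      rw [hJA a U]; module
    rw [h1, map_sub, LinearMap.sub_apply, hL3]
    simp only [map_add, map_smul, LinearMap.add_apply, LinearMap.smul_apply, smul_eq_mul]
  -- the main computation
  have e0 : (![(-1 : ℝ), δ, δ]) 0 = -1 := rfl
  have eo1 : (![(-1 : ℝ), δ, δ]) 1 = δ := rfl
  have eo2 : (![(-1 : ℝ), δ, δ]) 2 = δ := rfl
  rw [hR0, hR0, hR0, hR0]
  simp only [Fin.sum_univ_three, e0, eo1, eo2]
  simp only [hL2]
  simp only [hL1]
  simp only [hL3]
  simp only [hc00, hc11, hc22, r10, r20, r12]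
  ring
end

section
/- The functions x(t) = tan t and y(t) = 1/cos t are differentiable on the open interval (−π/2, π/2), satisfy x′(t) = y(t)² and y′(t) = x(t)·y(t) for all t ∈ (−π/2, π/2), and satisfy x(0) = 0, y(0) = 1. Moreover, there is no pair of differentiable functions x, y : ℝ → ℝ satisfying x′(t) = y(t)², y′(t) = x(t)·y(t) for all t ∈ ℝ with x(0) = 0 and y(0) = 1. -/
open Real

/-- `x = tan`, `y = 1/cos` solve the geodesic system
`x′ = y²`, `y′ = x·y` on `(−π/2, π/2)` with `x(0) = 0`, `y(0) = 1`, and no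
globally defined solution on all of `ℝ` has these initial values
(space-like incompleteness). -/
theorem stmt_16
    (x y : ℝ → ℝ)
    (hx : ∀ t : ℝ, x t = Real.tan t)
    (hy : ∀ t : ℝ, y t = 1 / Real.cos t) :
    (∀ t ∈ Set.Ioo (-(π / 2)) (π / 2),
      HasDerivAt x ((y t) ^ 2) t ∧ HasDerivAt y (x t * y t) t) ∧
    x 0 = 0 ∧ y 0 = 1 ∧
    ¬ ∃ u v : ℝ → ℝ, Differentiable ℝ u ∧ Differentiable ℝ v ∧
      (∀ t : ℝ, deriv u t = (v t) ^ 2) ∧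
      (∀ t : ℝ, deriv v t = u t * v t) ∧
      u 0 = 0 ∧ v 0 = 1 := by
  have hxfun : x = Real.tan := funext hx
  have hyfun : y = fun t => (Real.cos t)⁻¹ := by
    funext t; rw [hy t, one_div]
  refine ⟨?_, ?_, ?_, ?_⟩
  · intro t ht
    have hcos : Real.cos t ≠ 0 := by
      have := Real.cos_pos_of_mem_Ioo ht
      linarith
    constructor
    · rw [hxfun]
      have h := Real.hasDerivAt_tan hcos
      have : (y t) ^ 2 = 1 / Real.cos t ^ 2 := by
        rw [hy t, div_pow, one_pow]
      rw [this]; exact h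
    · have h := (Real.hasDerivAt_cos t).inv hcos
      have h' : HasDerivAt y (-(-Real.sin t) / Real.cos t ^ 2) t := by
        rw [hyfun]; exact h
      have heq : x t * y t = -(-Real.sin t) / Real.cos t ^ 2 := by
        rw [hx t, hy t, Real.tan_eq_sin_div_cos, neg_neg, div_mul_div_comm,
          mul_one, sq]
      rw [heq]; exact h'
  · rw [hx 0, Real.tan_zero]
  · rw [hy 0, Real.cos_zero]; norm_num
  · rintro ⟨u, v, hu, hv, hu', hv', hu0, hv0⟩
    -- conserved quantity v² - u² = 1
    have hE : ∀ t : ℝ, (v t) ^ 2 - (u t) ^ 2 = 1 := by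
      have hEdiff : Differentiable ℝ (fun t => (v t) ^ 2 - (u t) ^ 2) :=
        (hv.pow 2).sub (hu.pow 2)
      have hEderiv : ∀ t : ℝ, deriv (fun t => (v t) ^ 2 - (u t) ^ 2) t = 0 := by
        intro t
        have h1 : HasDerivAt (fun t => (v t) ^ 2 - (u t) ^ 2)
            (2 * v t ^ 1 * deriv v t - 2 * u t ^ 1 * deriv u t) t :=
          (((hv t).hasDerivAt).pow 2).sub (((hu t).hasDerivAt).pow 2)
        rw [h1.deriv, hu' t, hv' t]; ring
      intro t
      have := is_const_of_deriv_eq_zero hEdiff hEderiv t 0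
      simp only [hu0, hv0] at this
      rw [this]; norm_num
    -- hence u' = 1 + u²
    have hu'' : ∀ t : ℝ, deriv u t = 1 + (u t) ^ 2 := by
      intro t
      have := hE t
      rw [hu' t]; linarith
    -- w(t) = arctan (u t) - t is constant 0
    have hW : ∀ t : ℝ, Real.arctan (u t) - t = 0 := by
      have hWdiff : Differentiable ℝ (fun t => Real.arctan (u t) - t) :=
        (Real.differentiable_arctan.comp hu).sub differentiable_id
      have hWderiv : ∀ t : ℝ, deriv (fun t => Real.arctan (u t) - t) t = 0 := by
        intro t
        have hpos : (0:ℝ) < 1 + (u t) ^ 2 := by positivity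
        have h1 : HasDerivAt (fun t => Real.arctan (u t))
            (1 / (1 + (u t) ^ 2) * deriv u t) t :=
          (Real.hasDerivAt_arctan (u t)).comp t ((hu t).hasDerivAt)
        have h2 : HasDerivAt (fun t => Real.arctan (u t) - t)
            (1 / (1 + (u t) ^ 2) * deriv u t - 1) t := h1.sub (hasDerivAt_id t)
        rw [h2.deriv, hu'' t]
        field_simp
        norm_num
      intro t
      have := is_const_of_deriv_eq_zero hWdiff hWderiv t 0
      simpa [hu0, Real.arctan_zero] using this
    have h1 := hW (π / 2)
    have h2 := Real.arctan_lt_pi_div_two (u (π / 2))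
    linarith
end

section
/- The functions x(t) = y(t) = 1/(1 − t) are differentiable on (−∞, 1), satisfy x′(t) = y(t)² and y′(t) = x(t)·y(t) for all t < 1, and satisfy x(0) = y(0) = 1. Moreover, there is no pair of differentiable functions x, y : ℝ → ℝ satisfying x′(t) = y(t)², y′(t) = x(t)·y(t) for all t ∈ ℝ with x(0) = 1 and y(0) = 1. -/
lemma no_global_sol :
    ¬ ∃ u v : ℝ → ℝ, Differentiable ℝ u ∧ Differentiable ℝ v ∧
      (∀ t : ℝ, deriv u t = (v t) ^ 2) ∧
      (∀ t : ℝ, deriv v t = u t * v t) ∧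
      u 0 = 1 ∧ v 0 = 1 := by
  rintro ⟨u, v, hu, hv, hu', hv', hu0, hv0⟩
  -- Step 1: u = v, via integrating factor for w = u - v
  have hvc : Continuous v := hv.continuous
  set V : ℝ → ℝ := fun t => ∫ s in (0:ℝ)..t, v s with hVdef
  have hV : ∀ t : ℝ, HasDerivAt V (v t) t := fun t =>
    intervalIntegral.integral_hasDerivAt_right (hvc.intervalIntegrable 0 t)
      (hvc.stronglyMeasurableAtFilter _ _) hvc.continuousAt
  set F : ℝ → ℝ := fun t => (u t - v t) * Real.exp (V t) with hFdef
  have hF : ∀ t : ℝ, HasDerivAt F 0 t := by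
    intro t
    have h1 : HasDerivAt (fun t => u t - v t) (deriv u t - deriv v t) t :=
      ((hu t).hasDerivAt).sub ((hv t).hasDerivAt)
    have h2 : HasDerivAt (fun t => Real.exp (V t)) (Real.exp (V t) * v t) t :=
      (Real.hasDerivAt_exp (V t)).comp t (hV t)
    have := h1.mul h2
    refine this.congr_deriv ?_
    rw [hu', hv']
    ring
  have hFconst : ∀ t : ℝ, F t = F 0 := by
    have : ∀ t : ℝ, deriv F t = 0 := fun t => (hF t).deriv
    intro t
    exact is_const_of_deriv_eq_zero (fun s => (hF s).differentiableAt) this t 0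
  have huv : ∀ t : ℝ, u t = v t := by
    intro t
    have h0 : F 0 = 0 := by simp [hFdef, hu0, hv0]
    have := hFconst t
    rw [h0, hFdef] at this
    have he : Real.exp (V t) ≠ 0 := Real.exp_ne_zero _
    have : u t - v t = 0 := by
      rcases mul_eq_zero.mp this with h | h
      · exact h
      · exact absurd h he
    linarith
  -- Step 2: deriv u = u^2, u monotone, u ≥ 1 on [0,∞)
  have hu2 : ∀ t : ℝ, deriv u t = u t ^ 2 := by
    intro t; rw [hu' t, huv t]
  have hmono : Monotone u := by
    apply monotone_of_deriv_nonneg hu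
    intro t; rw [hu2 t]; positivity
  have hge : ∀ t : ℝ, 0 ≤ t → 1 ≤ u t := by
    intro t ht
    calc (1:ℝ) = u 0 := hu0.symm
    _ ≤ u t := hmono ht
  -- Step 3: MVT on [0,1] for g = -(u)⁻¹
  set g : ℝ → ℝ := fun t => -(u t)⁻¹ with hgdef
  have hgc : ContinuousOn g (Set.Icc 0 1) := by
    apply ContinuousOn.neg
    apply ContinuousOn.inv₀ hu.continuous.continuousOn
    intro t ht
    have := hge t ht.1
    linarith
  have hgd : ∀ c ∈ Set.Ioo (0:ℝ) 1, HasDerivAt g 1 c := by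
    intro c hc
    have hne : u c ≠ 0 := by have := hge c hc.1.le; linarith
    have := (((hu c).hasDerivAt).inv hne).neg
    refine this.congr_deriv ?_
    rw [hu2 c]
    field_simp
  obtain ⟨c, _, hc⟩ := exists_hasDerivAt_eq_slope g (fun _ => 1) one_pos hgc hgd
  have h1 : (1:ℝ) ≤ u 1 := hge 1 one_pos.le
  have hinv : (u 1)⁻¹ ≤ 1 := by
    rw [inv_le_one_iff₀]; right; exact h1
  have hinvpos : 0 < (u 1)⁻¹ := by positivity
  rw [hgdef] at hc
  simp only [hu0] at hc
  norm_num at hc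
  -- hc : 1 = -(u 1)⁻¹ + 1 or similar
  nlinarith [hc]

/-- `x(t) = y(t) = 1/(1−t)` solves the geodesic system
`x′ = y²`, `y′ = x·y` on `(−∞, 1)` with `x(0) = y(0) = 1`, and no globally
defined solution on all of `ℝ` has these initial values
(null incompleteness). -/
theorem stmt_17
    (x y : ℝ → ℝ)
    (hx : ∀ t : ℝ, x t = 1 / (1 - t))
    (hy : ∀ t : ℝ, y t = 1 / (1 - t)) :
    (∀ t ∈ Set.Iio (1 : ℝ),
      HasDerivAt x ((y t) ^ 2) t ∧ HasDerivAt y (x t * y t) t) ∧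
    x 0 = 1 ∧ y 0 = 1 ∧
    ¬ ∃ u v : ℝ → ℝ, Differentiable ℝ u ∧ Differentiable ℝ v ∧
      (∀ t : ℝ, deriv u t = (v t) ^ 2) ∧
      (∀ t : ℝ, deriv v t = u t * v t) ∧
      u 0 = 1 ∧ v 0 = 1 := by
  have hxe : x = fun t => 1 / (1 - t) := funext hx
  have hye : y = fun t => 1 / (1 - t) := funext hy
  refine ⟨?_, by rw [hx]; norm_num, by rw [hy]; norm_num, no_global_sol⟩
  intro t ht
  have hne : (1 : ℝ) - t ≠ 0 := by
    have : t < 1 := ht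
    intro h; linarith [sub_eq_zero.mp h]
  have h1 : HasDerivAt (fun s : ℝ => 1 - s) (-1) t := by
    simpa using (hasDerivAt_id t).const_sub 1
  have h2 : HasDerivAt (fun s : ℝ => 1 / (1 - s)) (1 / (1 - t) ^ 2) t := by
    have := (h1.inv hne)
    simp only [one_div]
    refine this.congr_deriv ?_
    ring
  constructor
  · rw [hxe, hy]
    convert h2 using 1
    field_simp
  · rw [hye, hx]

    convert h2 using 1
    field_simp
end
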